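/- arXiv:cs/0703064 — 5 statements merged into one kernel-verified Lean document; each statement's English description precedes it below -/
import Mathlib

section
/- Let Σ be a finite alphabet and let R ⊆ (Σ*)^{k+l} be a regular relation of arity n = k+l whose convolution ⊗R is recognised by a finite automaton with p states. Suppose R is locally finite with parameters k and l, i.e. for every k-tuple x̄ of words over Σ there are only finitely many l-tuples ȳ with (x̄,ȳ) ∈ R. Then for every (x̄,ȳ) ∈ R one has max{|y| : y ∈ ȳ} − max{|x| : x ∈ x̄} ≤ p. -/
/-- The convolution of an `n`-tuple of words over `α`: the word over the padded
alphabet `Fin n → Option α` whose `k`-th letter has `i`-th component the `k`-th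
letter of the `i`-th word (and `none`, i.e. the padding symbol `⋄`, if `k` is
beyond the end of that word). Its length is the maximum of the lengths. -/
def conv {α : Type*} {n : ℕ} (w : Fin n → List α) : List (Fin n → Option α) :=
  (List.range (Finset.univ.sup fun i => (w i).length)).map fun k i => (w i)[k]?

lemma conv_length {α : Type*} {n : ℕ} (w : Fin n → List α) :
    (conv w).length = Finset.univ.sup fun i => (w i).length := by
  simp [conv]

lemma conv_getElem {α : Type*} {n : ℕ} (w : Fin n → List α) (c : ℕ)
    (h : c < (conv w).length) (i : Fin n) : (conv w)[c] i = (w i)[c]? := by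
  unfold conv at h ⊢
  simp

lemma conv_getElem?_bind {α : Type*} {n : ℕ} (w : Fin n → List α) (i : Fin n) (c : ℕ) :
    ((conv w)[c]?).bind (fun a => a i) = (w i)[c]? := by
  rcases lt_or_ge c (conv w).length with h | h
  · rw [List.getElem?_eq_getElem h]
    simp [conv_getElem w c h i]
  · rw [List.getElem?_eq_none h, List.getElem?_eq_none (l := w i)]
    · rfl
    · calc (w i).length ≤ (conv w).length := by
            rw [conv_length]; exact Finset.le_sup (f := fun i => (w i).length) (Finset.mem_univ i)
        _ ≤ c := h

lemma sup_fin_add {k l : ℕ} (f : Fin (k + l) → ℕ) :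
    Finset.univ.sup f =
      (Finset.univ.sup fun i : Fin k => f (Fin.castAdd l i)) ⊔
        (Finset.univ.sup fun i : Fin l => f (Fin.natAdd k i)) := by
  apply le_antisymm
  · refine Finset.sup_le fun i _ => ?_
    induction i using Fin.addCases with
    | left i => exact le_sup_of_le_left (Finset.le_sup (f := fun i => f (Fin.castAdd l i)) (Finset.mem_univ i))
    | right i => exact le_sup_of_le_right (Finset.le_sup (f := fun i => f (Fin.natAdd k i)) (Finset.mem_univ i))
  · exact sup_le (Finset.sup_le fun i _ => Finset.le_sup (Finset.mem_univ _))
      (Finset.sup_le fun i _ => Finset.le_sup (Finset.mem_univ _))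

/-- If `R ⊆ (Σ*)^{k+l}` is locally finite (each `k`-tuple has only finitely many
`l`-tuples related to it) and its convolution is recognised by an automaton with
`p` states, then for every `(x̄,ȳ) ∈ R`, `max |y| - max |x| ≤ p`. -/
theorem locally_finite_regular_length_bound
    {Γ : Type*} [Fintype Γ] {k l p : ℕ}
    (R : Set ((Fin k → List Γ) × (Fin l → List Γ)))
    (M : DFA (Fin (k + l) → Option Γ) (Fin p))
    (hM : M.accepts = {w | ∃ t ∈ R, w = conv (Fin.append t.1 t.2)})
    (hfin : ∀ x : Fin k → List Γ, {y | (x, y) ∈ R}.Finite) :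
    ∀ x y, (x, y) ∈ R →
      (Finset.univ.sup fun i => (y i).length) ≤
        (Finset.univ.sup fun i => (x i).length) + p := by
  intro x y hxy
  by_contra hcon
  push_neg at hcon
  set m := Finset.univ.sup fun i => (x i).length with hm
  set w := conv (Fin.append x y) with hwdef
  have hxlen : ∀ j : Fin k, (x j).length ≤ m :=
    fun j => Finset.le_sup (f := fun i => (x i).length) (Finset.mem_univ j)
  have hL : w.length = Finset.univ.sup fun i => (Fin.append x y i).length := by
    rw [hwdef, conv_length]
  have hwlen : w.length =
      m ⊔ (Finset.univ.sup fun i => (y i).length) := by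
    rw [hwdef, conv_length, sup_fin_add (fun i => (Fin.append x y i).length)]
    simp [Fin.append_left, Fin.append_right]
    rfl
  have hwbig : m + p < w.length := by
    rw [hwlen]; exact lt_sup_of_lt_right hcon
  have hmw : m ≤ w.length := by omega
  have hwacc : w ∈ M.accepts := by rw [hM]; exact ⟨(x, y), hxy, rfl⟩
  -- every element of the suffix has `none` in the first k components
  have hnone : ∀ e ∈ w.drop m, ∀ j : Fin k, e (Fin.castAdd l j) = none := by
    intro e he j
    obtain ⟨c, hc, rfl⟩ := List.getElem_of_mem he
    rw [List.getElem_drop]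
    have h1 := conv_getElem (Fin.append x y) (m + c)
      (by rw [← hwdef]; rw [List.length_drop] at hc; omega) (Fin.castAdd l j)
    rw [Fin.append_left] at h1
    rw [show w[m + c]'(by rw [List.length_drop] at hc; omega) =
        (conv (Fin.append x y))[m + c]'(by rw [← hwdef]; rw [List.length_drop] at hc; omega) from rfl, h1]
    exact List.getElem?_eq_none (by have := hxlen j; omega)
  -- split the suffix with a loop
  set s0 := M.eval (w.take m) with hs0
  obtain ⟨q, a, b, c, hsplit, _, hbne, hqa, hqb, hqc⟩ :=
    M.evalFrom_split (s := s0) (t := M.evalFrom s0 (w.drop m)) (x := w.drop m)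
      (by rw [Fintype.card_fin, List.length_drop]; omega) rfl
  have hbpos : 0 < b.length := List.length_pos_iff.mpr hbne
  have haccfin : M.evalFrom s0 (w.drop m) ∈ M.accept := by
    rw [DFA.mem_accepts] at hwacc
    have heq : M.eval w = M.evalFrom s0 (w.drop m) := by
      show M.evalFrom M.start w = M.evalFrom (M.evalFrom M.start (w.take m)) (w.drop m)
      rw [← DFA.evalFrom_of_append, List.take_append_drop]
    rwa [heq] at hwacc
  have hrep : ∀ t : ℕ, M.evalFrom q (List.replicate t b).flatten = q := by
    intro t
    induction t with
    | zero => simp [DFA.evalFrom]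
    | succ t ih => rw [List.replicate_succ, List.flatten_cons, DFA.evalFrom_of_append, hqb, ih]
  -- the pumped words
  set wt : ℕ → List (Fin (k + l) → Option Γ) :=
    fun t => w.take m ++ (a ++ ((List.replicate (t + 1) b).flatten ++ c)) with hwt
  have htakelen : (w.take m).length = m := by rw [List.length_take]; omega
  have hwtlen : ∀ t, (wt t).length = m + a.length + ((t + 1) * b.length + c.length) := by
    intro t
    simp only [hwt, List.length_append, htakelen, List.length_flatten, List.map_replicate,
      List.sum_replicate, smul_eq_mul]
    ring
  have hwtacc : ∀ t, wt t ∈ M.accepts := by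
    intro t
    rw [DFA.mem_accepts]
    have heval : M.eval (wt t) = M.evalFrom q c := by
      show M.evalFrom M.start (wt t) = M.evalFrom q c
      rw [hwt]
      rw [DFA.evalFrom_of_append, DFA.evalFrom_of_append, DFA.evalFrom_of_append]
      have e0 : M.evalFrom M.start (List.take m w) = s0 := rfl
      rw [e0, hqa, hrep]
    rw [heval, hqc]
    exact haccfin
  -- elements of the pumped suffix come from the suffix of w
  have hwtmem : ∀ t, ∀ e ∈ a ++ ((List.replicate (t + 1) b).flatten ++ c), e ∈ w.drop m := by
    intro t e he
    rw [hsplit]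
    rcases List.mem_append.mp he with h | h
    · exact List.mem_append_left _ (List.mem_append_left _ h)
    rcases List.mem_append.mp h with h | h
    · obtain ⟨L, hL, heL⟩ := List.mem_flatten.mp h
      rw [List.eq_of_mem_replicate hL] at heL
      exact List.mem_append_left _ (List.mem_append_right _ heL)
    · exact List.mem_append_right _ h
  -- choose witnesses for the pumped words
  have hch : ∀ t : ℕ, ∃ z ∈ R, wt t = conv (Fin.append z.1 z.2) := by
    intro t; have := hwtacc t; rw [hM] at this; exact this
  choose z hzR hzconv using hch
  -- the first components of the witnesses are all x
  have hzx : ∀ t, (z t).1 = x := by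
    intro t
    funext j
    apply List.ext_getElem?
    intro c'
    have h1 : ((z t).1 j)[c']? = ((wt t)[c']?).bind fun e => e (Fin.castAdd l j) := by
      rw [hzconv t, ← Fin.append_left (z t).1 (z t).2 j, conv_getElem?_bind]
    have h2 : (x j)[c']? = (w[c']?).bind fun e => e (Fin.castAdd l j) := by
      rw [hwdef, ← Fin.append_left x y j, conv_getElem?_bind]
    rw [h1, h2]
    rcases lt_or_ge c' m with hc' | hc'
    · have : (wt t)[c']? = w[c']? := by
        rw [hwt]
        rw [List.getElem?_append_left (by omega)]
        rw [List.getElem?_take_of_lt hc']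
      rw [this]
    · -- both sides are none
      have hw' : (w[c']?).bind (fun e => e (Fin.castAdd l j)) = none := by
        rcases h : w[c']? with _ | e
        · rfl
        · have hem : e ∈ w.drop m := by
            have hlt := List.getElem?_eq_some_iff.mp h
            obtain ⟨hlt, rfl⟩ := hlt
            refine List.mem_iff_getElem.mpr ⟨c' - m, ?_, ?_⟩
            · rw [List.length_drop]; omega
            · rw [List.getElem_drop]; congr 1; omega
          simp [hnone _ hem j]
      have hwt' : ((wt t)[c']?).bind (fun e => e (Fin.castAdd l j)) = none := by
        rcases h : (wt t)[c']? with _ | e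
        · rfl
        · have hem : e ∈ a ++ ((List.replicate (t + 1) b).flatten ++ c) := by
            have h' : (wt t)[c']? =
                (a ++ ((List.replicate (t + 1) b).flatten ++ c))[c' - m]? := by
              rw [hwt, List.getElem?_append_right (by omega), htakelen]
            rw [h'] at h
            exact List.mem_of_getElem? h
          simp [hnone _ (hwtmem t e hem) j]
      rw [hw', hwt']
  -- the second components are pairwise distinct
  have hylen : ∀ t, (Finset.univ.sup fun i => ((z t).2 i).length) = (wt t).length := by
    intro t
    have : (wt t).length = m ⊔ (Finset.univ.sup fun i => ((z t).2 i).length) := by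
      rw [hzconv t, conv_length, sup_fin_add (fun i => (Fin.append (z t).1 (z t).2 i).length)]
      simp [Fin.append_left, Fin.append_right, hzx t]
      rfl
    have hgt : m < (wt t).length := by
      rw [hwtlen t]
      have h1 : 0 < (t + 1) * b.length := Nat.mul_pos (Nat.succ_pos t) hbpos
      omega
    rcases le_or_gt (Finset.univ.sup fun i => ((z t).2 i).length) m with h | h
    · rw [this, sup_eq_left.mpr h] at hgt
      exact absurd hgt (lt_irrefl m)
    · exact (this.trans (sup_eq_right.mpr h.le)).symm
  have hinj : Function.Injective fun t => (z t).2 := by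
    intro t1 t2 h
    simp only at h
    have h1 := hylen t1
    have h2 := hylen t2
    rw [h, h2] at h1
    rw [hwtlen t1, hwtlen t2] at h1
    have hb2 : (t1 + 1) * b.length = (t2 + 1) * b.length := by omega
    have := Nat.eq_of_mul_eq_mul_right hbpos hb2
    omega
  have hmem : ∀ t : ℕ, (z t).2 ∈ {y | (x, y) ∈ R} := by
    intro t
    have := hzR t
    rw [Set.mem_setOf_eq, ← hzx t]
    exact this
  exact (Set.infinite_of_injective_forall_mem hinj hmem) (hfin x)
end

section
/- For every positive integer i, the Boolean algebra B_{ω×i}, i.e. the product of i copies of the Boolean algebra of finite and cofinite subsets of ℕ, has an automatic presentation: there exist a finite alphabet Σ, a regular language A ⊆ Σ*, regular ternary relations on A that are the graphs of binary operations ⊔ and ⊓, a regular binary relation that is the graph of a complementation operation, and elements 0, 1 ∈ A, such that the resulting structure is a Boolean algebra isomorphic to the product of i copies of the Boolean algebra of finite and cofinite subsets of ℕ. -/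
/-- The carrier of the Boolean algebra of finite and cofinite subsets of ℕ. -/
def FinCofin : Type := {S : Set ℕ // S.Finite ∨ Sᶜ.Finite}

namespace FinCofin

def union (S T : FinCofin) : FinCofin :=
  ⟨S.1 ∪ T.1, by
    rcases S.2 with hS | hS
    · rcases T.2 with hT | hT
      · exact Or.inl (hS.union hT)
      · exact Or.inr (hT.subset (by rw [Set.compl_union]; exact Set.inter_subset_right))
    · exact Or.inr (hS.subset (by rw [Set.compl_union]; exact Set.inter_subset_left))⟩

def inter (S T : FinCofin) : FinCofin :=
  ⟨S.1 ∩ T.1, by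
    rcases S.2 with hS | hS
    · exact Or.inl (hS.subset Set.inter_subset_left)
    · rcases T.2 with hT | hT
      · exact Or.inl (hT.subset Set.inter_subset_right)
      · exact Or.inr (by rw [Set.compl_inter]; exact hS.union hT)⟩

def compl (S : FinCofin) : FinCofin :=
  ⟨S.1ᶜ, by rcases S.2 with h | h
            · exact Or.inr (by rwa [compl_compl])
            · exact Or.inl h⟩

def bot : FinCofin := ⟨∅, Or.inl Set.finite_empty⟩

def top : FinCofin := ⟨Set.univ, Or.inr (by simp)⟩

end FinCofin


set_option linter.unusedSectionVars false

namespace AutoPres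

variable {Γ : Type} [DecidableEq Γ] [Inhabited Γ]

/-- The decoded eventually-constant sequence of a word: read letter `n`,
clamping at the last letter. -/
def dec (w : List Γ) (n : ℕ) : Γ := w.getD (min n (w.length - 1)) default

/-- Canonical words: the last letter differs from the one before it
(in particular nonempty). -/
def Aset (Γ : Type) : Set (List Γ) := {w | w.dropLast.getLast? ≠ w.getLast?}

lemma nil_not_mem_Aset : [] ∉ Aset Γ := by simp [Aset]

lemma mem_Aset_ne_nil {w : List Γ} (h : w ∈ Aset Γ) : w ≠ [] := by
  rintro rfl; exact nil_not_mem_Aset h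

lemma length_pos_of_mem_Aset {w : List Γ} (h : w ∈ Aset Γ) : 0 < w.length :=
  List.length_pos_iff.mpr (mem_Aset_ne_nil h)

lemma dec_of_lt {w : List Γ} {k : ℕ} (h : k < w.length) : dec w k = w[k] := by
  have hm : min k (w.length - 1) = k := by omega
  rw [dec, hm, List.getD_eq_getElem _ _ h]

lemma dec_high {w : List Γ} {n n' : ℕ} (hn : w.length - 1 ≤ n) (hn' : w.length - 1 ≤ n') :
    dec w n = dec w n' := by
  unfold dec; congr 1; omega

lemma dec_high_eq_getLast {w : List Γ} {n : ℕ} (h : w.length - 1 ≤ n) :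
    dec w n = w.getLast?.getD default := by
  rcases eq_or_ne w [] with rfl | hw
  · simp [dec]
  · have hlen : 0 < w.length := List.length_pos_iff.mpr hw
    have hm : min n (w.length - 1) = w.length - 1 := by omega
    rw [dec, hm, List.getD_eq_getElem _ _ (by omega), List.getLast?_eq_getElem?,
      List.getElem?_eq_getElem (by omega)]
    rfl

/-- Eventually constant sequences. -/
def EvC (s : ℕ → Γ) : Prop := ∃ N, ∀ m, s (N + m) = s N

noncomputable def stab (s : ℕ → Γ) (hs : EvC s) : ℕ :=
  @Nat.find (fun N => ∀ m, s (N + m) = s N) (Classical.decPred _) hs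

lemma stab_spec (s : ℕ → Γ) (hs : EvC s) (m : ℕ) : s (stab s hs + m) = s (stab s hs) :=
  @Nat.find_spec (fun N => ∀ m, s (N + m) = s N) (Classical.decPred _) hs m

lemma stab_min (s : ℕ → Γ) (hs : EvC s) {N : ℕ} (h : N < stab s hs) :
    ¬ ∀ m, s (N + m) = s N :=
  @Nat.find_min (fun N => ∀ m, s (N + m) = s N) (Classical.decPred _) hs _ h

lemma stab_le (s : ℕ → Γ) (hs : EvC s) {N : ℕ} (h : ∀ m, s (N + m) = s N) :
    stab s hs ≤ N :=
  @Nat.find_min' (fun N => ∀ m, s (N + m) = s N) (Classical.decPred _) hs _ h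

lemma stab_eq_of_ge (s : ℕ → Γ) (hs : EvC s) {n : ℕ} (h : stab s hs ≤ n) :
    s n = s (stab s hs) := by
  have := stab_spec s hs (n - stab s hs)
  rwa [Nat.add_sub_cancel' h] at this

/-- The canonical word encoding an eventually constant sequence. -/
noncomputable def enc (s : ℕ → Γ) (hs : EvC s) : List Γ := (List.range (stab s hs + 1)).map s

lemma enc_length (s : ℕ → Γ) (hs : EvC s) : (enc s hs).length = stab s hs + 1 := by
  simp [enc]

lemma dec_enc (s : ℕ → Γ) (hs : EvC s) : dec (enc s hs) = s := by
  funext n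
  by_cases h : n < stab s hs + 1
  · rw [dec_of_lt (by simpa [enc_length] using h)]
    simp [enc]
  · rw [dec_high (n' := stab s hs) (by simp [enc_length]; omega) (by simp [enc_length]),
      dec_of_lt (by simp [enc_length])]
    simp [enc]
    exact (stab_eq_of_ge s hs (by omega)).symm

lemma enc_mem_Aset (s : ℕ → Γ) (hs : EvC s) : enc s hs ∈ Aset Γ := by
  have hsplit : enc s hs = (List.range (stab s hs)).map s ++ [s (stab s hs)] := by
    rw [enc, List.range_succ, List.map_append]; rfl
  rw [Aset, Set.mem_setOf_eq, hsplit, List.dropLast_concat, List.getLast?_concat]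
  rcases Nat.eq_zero_or_pos (stab s hs) with h0 | hpos
  · simp [h0]
  · obtain ⟨k, hk⟩ := Nat.exists_eq_add_of_lt hpos
    have hk' : stab s hs = k + 1 := by omega
    rw [hk', List.range_succ, List.map_append, List.map_singleton, List.getLast?_concat]
    intro hc
    have hc' : s k = s (k + 1) := by simpa using hc
    refine stab_min s hs (N := k) (by omega) (fun m => ?_)
    cases m with
    | zero => rfl
    | succ m' =>
      have : k + (m' + 1) = (k + 1) + m' := by omega
      rw [this, ← hk', stab_spec s hs m', hk', hc']

lemma evc_dec (w : List Γ) : EvC (dec w) :=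
  ⟨w.length - 1, fun m => dec_high (by omega) (by omega)⟩

lemma stab_dec {w : List Γ} (h : w ∈ Aset Γ) : stab (dec w) (evc_dec w) = w.length - 1 := by
  have hlen : 0 < w.length := length_pos_of_mem_Aset h
  refine le_antisymm (stab_le _ _ (fun m => dec_high (by omega) (by omega))) ?_
  by_contra hlt
  push_neg at hlt
  set N := stab (dec w) (evc_dec w) with hN
  have hsp : ∀ m, dec w (N + m) = dec w N := fun m => stab_spec (dec w) (evc_dec w) m
  have h2 : 2 ≤ w.length := by omega
  have e1 : dec w (w.length - 1) = dec w N := by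
    have := hsp (w.length - 1 - N); rwa [Nat.add_sub_cancel' (by omega)] at this
  have e2 : dec w (w.length - 2) = dec w N := by
    have := hsp (w.length - 2 - N); rwa [Nat.add_sub_cancel' (by omega)] at this
  have e3 : dec w (w.length - 2) = dec w (w.length - 1) := by rw [e1, e2]
  rw [dec_of_lt (by omega), dec_of_lt (by omega)] at e3
  have hd : w.dropLast.getLast? = some (w[w.length - 2]) := by
    rw [List.getLast?_dropLast, if_neg (by omega), List.getElem?_eq_getElem (by omega)]
  have hl : w.getLast? = some (w[w.length - 1]) := by
    rw [List.getLast?_eq_getElem?, List.getElem?_eq_getElem (by omega)]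
  exact h (by rw [hd, hl, e3])

lemma enc_dec {w : List Γ} (h : w ∈ Aset Γ) : enc (dec w) (evc_dec w) = w := by
  have hlen : 0 < w.length := length_pos_of_mem_Aset h
  apply List.ext_getElem
  · rw [enc_length, stab_dec h]; omega
  · intro k h1 h2
    have hk : k < stab (dec w) (evc_dec w) + 1 := by rwa [enc_length] at h1
    have : (enc (dec w) (evc_dec w))[k] = dec w k := by simp [enc]
    rw [this, dec_of_lt h2]

/-- enc only depends on the sequence. -/
lemma enc_congr {s t : ℕ → Γ} (hs : EvC s) (h : s = t) :
    enc s hs = enc t (h ▸ hs) := by subst h; rfl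

/-! ### The DFA for `Aset` -/

def dfaA (Γ : Type) : DFA Γ (Option Γ × Option Γ) where
  step := fun s a => (s.2, some a)
  start := (none, none)
  accept := {s | s.1 ≠ s.2}

lemma dfaA_eval (w : List Γ) : (dfaA Γ).eval w = (w.dropLast.getLast?, w.getLast?) := by
  induction w using List.reverseRecOn with
  | nil => rfl
  | append_singleton u a ih =>
      rw [DFA.eval_append_singleton, ih]
      simp [dfaA, List.dropLast_concat, List.getLast?_concat]

lemma regular_Aset [Fintype Γ] : Language.IsRegular (Aset Γ : Language Γ) := by
  refine ⟨Option Γ × Option Γ, inferInstance, dfaA Γ, ?_⟩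
  ext w
  rw [DFA.mem_accepts, dfaA_eval]
  rfl

/-! ### Convolution machinery and the relation DFA -/

section ConvMachine

open scoped Classical

/-- Length of a convolution. -/
def mlen {n : ℕ} (w : Fin n → List Γ) : ℕ := Finset.univ.sup fun j => (w j).length

variable {n : ℕ} (P : (Fin n → Γ) → Prop)

lemma length_conv (w : Fin n → List Γ) : (conv w).length = mlen w := by
  simp [conv, mlen]

lemma getElem_conv (w : Fin n → List Γ) {k : ℕ} (h : k < (conv w).length) (j : Fin n) :
    (conv w)[k] j = (w j)[k]? := by
  unfold conv at h ⊢; simp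

lemma le_mlen (w : Fin n → List Γ) (j : Fin n) : (w j).length ≤ mlen w := by
  rw [mlen]; exact Finset.le_sup (f := fun j => (w j).length) (Finset.mem_univ j)

lemma lt_mlen_iff {w : Fin n → List Γ} {k : ℕ} : k < mlen w ↔ ∃ j, k < (w j).length := by
  rw [mlen, Finset.lt_sup_iff]; simp

/-- Projection of a convolution candidate to its `j`-th component. -/
def cproj (u : List (Fin n → Option Γ)) (j : Fin n) : List Γ := u.filterMap (fun g => g j)

lemma cproj_append (u : List (Fin n → Option Γ)) (g : Fin n → Option Γ) (j : Fin n) :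
    cproj (u ++ [g]) j = cproj u j ++ (g j).toList := by
  cases h : g j <;> simp [cproj, h]

lemma cproj_length_le (u : List (Fin n → Option Γ)) (j : Fin n) :
    (cproj u j).length ≤ u.length :=
  List.length_filterMap_le _ _

lemma filterMap_of_pointwise {β : Type*} (f : β → Option Γ) (u : List β) :
    ∀ (l : List Γ), (∀ k (h : k < u.length), f (u[k]) = l[k]?) →
      u.filterMap f = l.take u.length := by
  induction u with
  | nil => intro l _; simp
  | cons a u ih =>
    intro l h
    cases l with
    | nil =>
      have h0 : f a = none := by have := h 0 (by simp); simpa using this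
      rw [List.filterMap_cons_none h0, ih [] (fun k hk => by have := h (k+1) (by simpa using Nat.succ_lt_succ hk); simpa using this)]
      simp
    | cons b l =>
      have h0 : f a = some b := by have := h 0 (by simp); simpa using this
      rw [List.filterMap_cons_some h0, ih l (fun k hk => by have := h (k+1) (by simpa using Nat.succ_lt_succ hk); simpa using this)]
      simp

lemma cproj_conv (w : Fin n → List Γ) (j : Fin n) : cproj (conv w) j = w j := by
  rw [cproj, filterMap_of_pointwise _ _ (w j) (fun k hk => getElem_conv w hk j), length_conv]
  exact List.take_of_length_le (le_mlen w j)

lemma dec_concat_self (c : List Γ) (x : Γ) : dec (c ++ [x]) c.length = x := by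
  rw [dec_of_lt (by simp)]
  exact List.getElem_concat_length rfl _

/-- The condition characterizing acceptable prefixes. -/
def Cond (u : List (Fin n → Option Γ)) : Prop :=
  (∀ (j : Fin n) (k : ℕ) (h : k < u.length), u[k] j = (cproj u j)[k]?) ∧
  (∀ k < u.length, ∃ j, k < (cproj u j).length) ∧
  (∀ j : Fin n, (cproj u j).length < u.length → cproj u j ∈ Aset Γ) ∧
  (∀ k < u.length, P (fun j => dec (cproj u j) k))

lemma cond_nil : Cond P ([] : List (Fin n → Option Γ)) := by
  refine ⟨?_, ?_, ?_, ?_⟩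
  · intro j k hk; simp at hk
  · intro k hk; simp at hk
  · intro j hj; simp [cproj] at hj
  · intro k hk; simp at hk

lemma mlen_cproj {u : List (Fin n → Option Γ)} (h : Cond P u) :
    mlen (fun j => cproj u j) = u.length := by
  apply le_antisymm
  · exact Finset.sup_le fun j _ => cproj_length_le u j
  · rcases Nat.eq_zero_or_pos u.length with h0 | hpos
    · omega
    · obtain ⟨j, hj⟩ := h.2.1 (u.length - 1) (by omega)
      have h2 := cproj_length_le u j
      have h3 := le_mlen (fun j => cproj u j) j
      omega

lemma conv_cproj {u : List (Fin n → Option Γ)} (h : Cond P u) :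
    u = conv (fun j => cproj u j) := by
  apply List.ext_getElem
  · rw [length_conv, mlen_cproj P h]
  · intro k h1 h2
    funext j
    rw [getElem_conv _ h2 j]
    exact h.1 j k h1

lemma cond_append_isSome {u : List (Fin n → Option Γ)} {g : Fin n → Option Γ}
    (h : Cond P (u ++ [g])) (j : Fin n) (hj : (g j).isSome = true) :
    (cproj u j).length = u.length := by
  obtain ⟨x, hx⟩ := Option.isSome_iff_exists.mp hj
  have hkey : cproj u j = (cproj (u ++ [g]) j).take u.length := by
    refine filterMap_of_pointwise _ u _ (fun k hk => ?_)
    have h1 := h.1 j k (by simp; omega)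
    rwa [List.getElem_append_left hk] at h1
  rcases lt_or_eq_of_le (cproj_length_le u j) with hlt | heq
  · exfalso
    rw [cproj_append, hx] at hkey
    have hlen := congrArg List.length hkey
    simp [List.length_take] at hlen
    omega
  · exact heq

lemma cond_of_cond_append {u : List (Fin n → Option Γ)} {g : Fin n → Option Γ}
    (h : Cond P (u ++ [g])) : Cond P u := by
  refine ⟨?_, ?_, ?_, ?_⟩
  · intro j k hk
    have h1 := h.1 j k (by simp; omega)
    rw [List.getElem_append_left hk] at h1
    rw [h1, cproj_append]
    cases hgj : g j with
    | none => simp [hgj]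
    | some x =>
      have hL := cond_append_isSome P h j (by simp [hgj])
      rw [List.getElem?_append_left (by omega)]
  · intro k hk
    obtain ⟨j, hj⟩ := h.2.1 k (by simp; omega)
    rw [cproj_append] at hj
    cases hgj : g j with
    | none => refine ⟨j, ?_⟩; simpa [hgj] using hj
    | some x =>
      have hL := cond_append_isSome P h j (by simp [hgj])
      exact ⟨j, by omega⟩
  · intro j hLm
    have hgj : g j = none := by
      cases hgj : g j with
      | none => rfl
      | some x =>
        have hL := cond_append_isSome P h j (by simp [hgj])
        omega
    have h3 := h.2.2.1 j (by rw [cproj_append, hgj]; simp; omega)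
    rwa [cproj_append, hgj, Option.toList_none, List.append_nil] at h3
  · intro k hk
    have hfun : (fun j => dec (cproj (u ++ [g]) j) k) = (fun j => dec (cproj u j) k) := by
      funext j
      rw [cproj_append]
      cases hgj : g j with
      | none => simp [hgj]
      | some x =>
        have hL := cond_append_isSome P h j (by simp [hgj])
        rw [Option.toList_some, dec_of_lt (by simp; omega), dec_of_lt (by omega),
          List.getElem_append_left (by omega)]
    have h4 := h.2.2.2 k (by simp; omega)
    rwa [hfun] at h4

/-- Per-component state: (last letter, previous letter, ended flag). -/
abbrev CompSt (Γ : Type) := Option Γ × Option Γ × Bool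

/-- The state associated to a word. -/
def stOf (u : List (Fin n → Option Γ)) : Fin n → CompSt Γ := fun j =>
  ((cproj u j).getLast?, (cproj u j).dropLast.getLast?,
    decide ((cproj u j).length < u.length))

def okC : CompSt Γ → Option Γ → Prop := fun c o =>
  if c.2.2 = true then o = none else (o.isSome = true ∨ c.2.1 ≠ c.1)

def updC : CompSt Γ → Option Γ → CompSt Γ := fun c o =>
  match o with
  | some x => (some x, c.1, c.2.2)
  | none => (c.1, c.2.1, true)

noncomputable def stepM :
    Option (Fin n → CompSt Γ) → (Fin n → Option Γ) → Option (Fin n → CompSt Γ) :=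
  fun s g =>
    match s with
    | none => none
    | some f =>
      if (∃ j, (f j).2.2 = false ∧ (g j).isSome = true) ∧ (∀ j, okC (f j) (g j)) ∧
          P (fun j => (g j).getD ((f j).1.getD default))
      then some (fun j => updC (f j) (g j)) else none

lemma stepM_some (f : Fin n → CompSt Γ) (g : Fin n → Option Γ) :
    stepM P (some f) g =
      if (∃ j, (f j).2.2 = false ∧ (g j).isSome = true) ∧ (∀ j, okC (f j) (g j)) ∧
          P (fun j => (g j).getD ((f j).1.getD default))
      then some (fun j => updC (f j) (g j)) else none := rfl

noncomputable def stInv (u : List (Fin n → Option Γ)) : Option (Fin n → CompSt Γ) :=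
  if Cond P u then some (stOf u) else none

lemma stInv_append (u : List (Fin n → Option Γ)) (g : Fin n → Option Γ) :
    stInv P (u ++ [g]) = stepM P (stInv P u) g := by
  by_cases hc : Cond P u
  case neg =>
    rw [stInv, if_neg (fun h' => hc (cond_of_cond_append P h')), stInv, if_neg hc]
    rfl
  set m := u.length with hm
  have hiff : Cond P (u ++ [g]) ↔ ((∃ j, (stOf u j).2.2 = false ∧ (g j).isSome = true) ∧
      (∀ j, okC (stOf u j) (g j)) ∧
      P (fun j => (g j).getD ((stOf u j).1.getD default))) := by
    constructor
    · intro h'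
      refine ⟨?_, ?_, ?_⟩
      · obtain ⟨j, hj⟩ := h'.2.1 m (by simp [hm])
        rw [cproj_append] at hj
        cases hgj : g j with
        | none =>
          exfalso; rw [hgj] at hj; simp at hj
          have := cproj_length_le u j; omega
        | some x =>
          have hL := cond_append_isSome P h' j (by simp [hgj])
          exact ⟨j, by simp [stOf, hL, hgj]⟩
      · intro j
        cases hgj : g j with
        | some x =>
          have hL := cond_append_isSome P h' j (by simp [hgj])
          simp [okC, stOf, hL, hgj]
        | none =>
          rcases lt_or_eq_of_le (cproj_length_le u j) with hlt | heq
          · simp [okC, stOf, hlt]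
          · have h3 := h'.2.2.1 j (by rw [cproj_append, hgj]; simp; omega)
            rw [cproj_append, hgj, Option.toList_none, List.append_nil] at h3
            simp [okC, stOf, heq]
            exact h3
      · have h4 := h'.2.2.2 m (by simp [hm])
        have hfun : (fun j => dec (cproj (u ++ [g]) j) m)
            = (fun j => (g j).getD ((stOf u j).1.getD default)) := by
          funext j
          rw [cproj_append]
          cases hgj : g j with
          | none =>
            rw [Option.toList_none, List.append_nil]
            have := cproj_length_le u j
            rw [dec_high_eq_getLast (by omega)]
            simp [stOf, hgj]
          | some x =>
            have hL := cond_append_isSome P h' j (by simp [hgj])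
            rw [Option.toList_some, hm, ← hL, dec_concat_self]
            simp [stOf, hgj]
        rwa [hfun] at h4
    · rintro ⟨hex, hok, hP⟩
      have b1 : ∀ j, (g j).isSome = true → (cproj u j).length = m := by
        intro j hj
        rcases lt_or_eq_of_le (cproj_length_le u j) with hlt | heq
        · have := hok j
          simp [okC, stOf, hlt] at this
          rw [this] at hj; simp at hj
        · exact heq
      refine ⟨?_, ?_, ?_, ?_⟩
      · intro j k hk
        rcases Nat.lt_or_ge k m with hkm | hkm
        · rw [List.getElem_append_left hkm, hc.1 j k hkm, cproj_append]
          cases hgj : g j with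
          | none => simp [hgj]
          | some x =>
            have hL := b1 j (by simp [hgj])
            rw [List.getElem?_append_left (by omega)]
        · have hkm' : k = m := by simp at hk; omega
          subst hkm'
          rw [List.getElem_concat_length hm, cproj_append]
          cases hgj : g j with
          | none =>
            simp only [Option.toList_none, List.append_nil]
            exact (List.getElem?_eq_none (by have := cproj_length_le u j; omega)).symm
          | some x =>
            have hL := b1 j (by simp [hgj])
            rw [Option.toList_some, ← hL, List.getElem?_concat_length]
      · intro k hk
        rcases Nat.lt_or_ge k m with hkm | hkm
        · obtain ⟨j, hj⟩ := hc.2.1 k hkm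
          refine ⟨j, ?_⟩
          rw [cproj_append]
          simp
          omega
        · obtain ⟨j, hj1, hj2⟩ := hex
          have hL := b1 j hj2
          refine ⟨j, ?_⟩
          rw [cproj_append]
          obtain ⟨x, hx⟩ := Option.isSome_iff_exists.mp hj2
          simp [hx]
          simp at hk
          omega
      · intro j hlen
        cases hgj : g j with
        | some x =>
          have hL := b1 j (by simp [hgj])
          rw [cproj_append, hgj] at hlen
          simp [hL] at hlen
          omega
        | none =>
          rw [cproj_append, hgj, Option.toList_none, List.append_nil]
          rcases lt_or_eq_of_le (cproj_length_le u j) with hlt | heq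
          · exact hc.2.2.1 j hlt
          · have := hok j
            simp [okC, stOf, heq, hgj] at this
            exact this
      · intro k hk
        rcases Nat.lt_or_ge k m with hkm | hkm
        · have hfun : (fun j => dec (cproj (u ++ [g]) j) k)
              = (fun j => dec (cproj u j) k) := by
            funext j
            rw [cproj_append]
            cases hgj : g j with
            | none => simp [hgj]
            | some x =>
              have hL := b1 j (by simp [hgj])
              rw [Option.toList_some, dec_of_lt (by simp; omega), dec_of_lt (by omega),
                List.getElem_append_left (by omega)]
          rw [hfun]
          exact hc.2.2.2 k hkm
        · have hkm' : k = m := by simp at hk; omega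
          subst hkm'
          have hfun : (fun j => dec (cproj (u ++ [g]) j) m)
              = (fun j => (g j).getD ((stOf u j).1.getD default)) := by
            funext j
            rw [cproj_append]
            cases hgj : g j with
            | none =>
              rw [Option.toList_none, List.append_nil]
              have := cproj_length_le u j
              rw [dec_high_eq_getLast (by omega)]
              simp [stOf, hgj]
            | some x =>
              have hL := b1 j (by simp [hgj])
              rw [Option.toList_some, ← hL, dec_concat_self]
              simp [stOf, hgj]
          rw [hfun]
          exact hP
  by_cases hC : Cond P (u ++ [g])
  · rw [stInv, if_pos hC, stInv, if_pos hc, stepM_some, if_pos (hiff.mp hC)]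
    congr 1
    funext j
    rcases (hiff.mp hC) with ⟨hex, hok, hP⟩
    have b1 : ∀ j, (g j).isSome = true → (cproj u j).length = m :=
      fun j hj => cond_append_isSome P hC j hj
    cases hgj : g j with
    | some x =>
      have hL := b1 j (by simp [hgj])
      simp only [stOf, updC, cproj_append, hgj, Option.toList_some]
      rw [List.getLast?_concat, List.dropLast_concat]
      simp [hL]
    | none =>
      simp only [stOf, updC, cproj_append, hgj, Option.toList_none, List.append_nil]
      have := cproj_length_le u j
      simp
      omega
  · rw [stInv, if_neg hC, stInv, if_pos hc, stepM_some, if_neg (fun h => hC (hiff.mpr h))]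

noncomputable def dfaC : DFA (Fin n → Option Γ) (Option (Fin n → CompSt Γ)) where
  step := stepM P
  start := some (fun _ => (none, none, false))
  accept := {s | ∃ f, s = some f ∧ ∀ j, (f j).2.2 = true ∨ (f j).2.1 ≠ (f j).1}

lemma stOf_nil : stOf ([] : List (Fin n → Option Γ)) = fun _ => (none, none, false) := by
  funext j; simp [stOf, cproj]

lemma dfaC_eval (u : List (Fin n → Option Γ)) : (dfaC P).eval u = stInv P u := by
  induction u using List.reverseRecOn with
  | nil =>
    rw [DFA.eval_nil, stInv, if_pos (cond_nil P)]
    show some _ = _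
    rw [stOf_nil]
  | append_singleton u g ih =>
    rw [DFA.eval_append_singleton, ih, stInv_append]
    rfl

/-- The language of convolutions of tuples of canonical words satisfying `P` pointwise. -/
def LangL : Language (Fin n → Option Γ) :=
  {u | ∃ w : Fin n → List Γ, (∀ j, w j ∈ Aset Γ) ∧
    (∀ k < mlen w, P (fun j => dec (w j) k)) ∧ u = conv w}

lemma accepts_dfaC : (dfaC P).accepts = LangL P := by
  ext u
  rw [DFA.mem_accepts]
  show (dfaC P).eval u ∈ (dfaC P).accept ↔ _
  rw [dfaC_eval]
  constructor
  · intro hmem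
    by_cases hC : Cond P u
    · rw [stInv, if_pos hC] at hmem
      obtain ⟨f, hf, hacc⟩ := hmem
      have hf' : stOf u = f := by injection hf
      subst hf'
      refine ⟨fun j => cproj u j, ?_, ?_, conv_cproj P hC⟩
      · intro j
        rcases lt_or_eq_of_le (cproj_length_le u j) with hlt | heq
        · exact hC.2.2.1 j hlt
        · have h2 := hacc j
          simp only [stOf] at h2
          rcases h2 with h2 | h2
          · simp [heq] at h2
          · exact h2
      · intro k hk
        rw [mlen_cproj P hC] at hk
        exact hC.2.2.2 k hk
    · rw [stInv, if_neg hC] at hmem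
      obtain ⟨f, hf, -⟩ := hmem
      exact absurd hf (by simp)
  · rintro ⟨w, hA, hP, rfl⟩
    have hcw : ∀ j, cproj (conv w) j = w j := cproj_conv w
    have hlen : (conv w).length = mlen w := length_conv w
    have hC : Cond P (conv w) := by
      refine ⟨?_, ?_, ?_, ?_⟩
      · intro j k hk; rw [getElem_conv _ hk j, hcw]
      · intro k hk
        rw [hlen] at hk
        obtain ⟨j, hj⟩ := lt_mlen_iff.mp hk
        exact ⟨j, by rw [hcw]; exact hj⟩
      · intro j _; rw [hcw]; exact hA j
      · intro k hk
        rw [hlen] at hk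
        have h1 := hP k hk
        have hfun : (fun j => dec (cproj (conv w) j) k) = fun j => dec (w j) k := by
          funext j; rw [hcw]
        rw [hfun]
        exact h1
    rw [stInv, if_pos hC]
    refine ⟨stOf (conv w), rfl, fun j => ?_⟩
    by_cases hl : (cproj (conv w) j).length < (conv w).length
    · left; simp [stOf, hl]
    · right
      simp only [stOf]
      rw [hcw]
      exact hA j

lemma regular_LangL [Fintype Γ] : Language.IsRegular (LangL P) :=
  ⟨Option (Fin n → CompSt Γ), inferInstance, dfaC P, accepts_dfaC P⟩

end ConvMachine

/-! ### Eventually-constant sequence combinators -/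

lemma evc_ge {s : ℕ → Γ} (hs : EvC s) : ∃ N, ∀ n, N ≤ n → s n = s N := by
  obtain ⟨N, hN⟩ := hs
  exact ⟨N, fun n hn => by have := hN (n - N); rwa [Nat.add_sub_cancel' hn] at this⟩

lemma evc_map2 {s t : ℕ → Γ} (op : Γ → Γ → Γ) (hs : EvC s) (ht : EvC t) :
    EvC (fun k => op (s k) (t k)) := by
  obtain ⟨N1, h1⟩ := evc_ge hs
  obtain ⟨N2, h2⟩ := evc_ge ht
  refine ⟨max N1 N2, fun m => ?_⟩
  have e1 : s (max N1 N2 + m) = s (max N1 N2) := by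
    rw [h1 _ (by omega), h1 (max N1 N2) (by omega)]
  have e2 : t (max N1 N2 + m) = t (max N1 N2) := by
    rw [h2 _ (by omega), h2 (max N1 N2) (by omega)]
  show op (s (max N1 N2 + m)) (t (max N1 N2 + m)) = op (s (max N1 N2)) (t (max N1 N2))
  rw [e1, e2]

lemma evc_map1 {s : ℕ → Γ} (op : Γ → Γ) (hs : EvC s) : EvC (fun k => op (s k)) := by
  obtain ⟨N1, h1⟩ := evc_ge hs
  refine ⟨N1, fun m => ?_⟩
  show op (s (N1 + m)) = op (s N1)
  rw [h1 _ (by omega)]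

lemma singleton_mem_Aset (x : Γ) : [x] ∈ Aset Γ := by simp [Aset]

lemma dec_singleton (x : Γ) (k : ℕ) : dec [x] k = x := by simp [dec]

/-! ### The canonical binary and unary operations on `Aset` -/

section Ops

variable (op : Γ → Γ → Γ) (op1 : Γ → Γ)

noncomputable def fop (a b : ↥(Aset Γ)) : ↥(Aset Γ) :=
  ⟨enc (fun k => op (dec a.1 k) (dec b.1 k)) (evc_map2 op (evc_dec a.1) (evc_dec b.1)),
    enc_mem_Aset _ _⟩

lemma dec_fop (a b : ↥(Aset Γ)) : dec (fop op a b).1 = fun k => op (dec a.1 k) (dec b.1 k) :=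
  dec_enc _ _

noncomputable def fop1 (a : ↥(Aset Γ)) : ↥(Aset Γ) :=
  ⟨enc (fun k => op1 (dec a.1 k)) (evc_map1 op1 (evc_dec a.1)), enc_mem_Aset _ _⟩

lemma dec_fop1 (a : ↥(Aset Γ)) : dec (fop1 op1 a).1 = fun k => op1 (dec a.1 k) :=
  dec_enc _ _

/-- The pointwise condition for a binary operation. -/
def Pop : (Fin 3 → Γ) → Prop := fun v => v 2 = op (v 0) (v 1)

/-- The pointwise condition for a unary operation. -/
def Pop1 : (Fin 2 → Γ) → Prop := fun v => v 1 = op1 (v 0)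

lemma lang_fop :
    {u : List (Fin 3 → Option Γ) |
        ∃ a b : ↥(Aset Γ), u = conv ![(a : List Γ), (b : List Γ), (fop op a b : List Γ)]}
      = LangL (Pop op) := by
  ext u
  simp only [Set.mem_setOf_eq, LangL]
  constructor
  · rintro ⟨a, b, rfl⟩
    refine ⟨![(a : List Γ), (b : List Γ), (fop op a b : List Γ)], ?_, ?_, rfl⟩
    · intro j
      fin_cases j
      · exact a.2
      · exact b.2
      · exact (fop op a b).2
    · intro k _
      show Pop op _
      simp only [Pop, Matrix.cons_val_zero, Matrix.cons_val_one, Matrix.head_cons,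
        Matrix.cons_val_two, Matrix.tail_cons]
      exact congrFun (dec_fop op a b) k
  · rintro ⟨w, hA, hP, rfl⟩
    have hP' : ∀ k < mlen w, dec (w 2) k = op (dec (w 0) k) (dec (w 1) k) := by
      intro k hk
      have h1 := hP k hk
      simpa only [Pop, Matrix.cons_val_zero, Matrix.cons_val_one, Matrix.head_cons,
        Matrix.cons_val_two, Matrix.tail_cons] using h1
    have hmm : 0 < mlen w := lt_of_lt_of_le (length_pos_of_mem_Aset (hA 0)) (le_mlen w 0)
    have hdec : dec (w 2) = fun k => op (dec (w 0) k) (dec (w 1) k) := by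
      funext k
      rcases Nat.lt_or_ge k (mlen w) with hk | hk
      · exact hP' k hk
      · have e0 : dec (w 0) k = dec (w 0) (mlen w - 1) :=
          dec_high (by have := le_mlen w 0; omega) (by have := le_mlen w 0; omega)
        have e1 : dec (w 1) k = dec (w 1) (mlen w - 1) :=
          dec_high (by have := le_mlen w 1; omega) (by have := le_mlen w 1; omega)
        have e2 : dec (w 2) k = dec (w 2) (mlen w - 1) :=
          dec_high (by have := le_mlen w 2; omega) (by have := le_mlen w 2; omega)
        rw [e0, e1, e2]
        exact hP' (mlen w - 1) (by omega)
    refine ⟨⟨w 0, hA 0⟩, ⟨w 1, hA 1⟩, ?_⟩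
    have hw2 : w 2 = (fop op ⟨w 0, hA 0⟩ ⟨w 1, hA 1⟩ : List Γ) := by
      rw [← enc_dec (hA 2)]
      exact enc_congr _ hdec
    have hwe : w = ![((⟨w 0, hA 0⟩ : ↥(Aset Γ)) : List Γ), ((⟨w 1, hA 1⟩ : ↥(Aset Γ)) : List Γ),
        (fop op ⟨w 0, hA 0⟩ ⟨w 1, hA 1⟩ : List Γ)] := by
      funext j
      fin_cases j
      · rfl
      · rfl
      · exact hw2
    rw [← hwe]

lemma lang_fop1 :
    {u : List (Fin 2 → Option Γ) |
        ∃ a : ↥(Aset Γ), u = conv ![(a : List Γ), (fop1 op1 a : List Γ)]}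
      = LangL (Pop1 op1) := by
  ext u
  simp only [Set.mem_setOf_eq, LangL]
  constructor
  · rintro ⟨a, rfl⟩
    refine ⟨![(a : List Γ), (fop1 op1 a : List Γ)], ?_, ?_, rfl⟩
    · intro j
      fin_cases j
      · exact a.2
      · exact (fop1 op1 a).2
    · intro k _
      show Pop1 op1 _
      simp only [Pop1, Matrix.cons_val_zero, Matrix.cons_val_one, Matrix.head_cons]
      exact congrFun (dec_fop1 op1 a) k
  · rintro ⟨w, hA, hP, rfl⟩
    have hP' : ∀ k < mlen w, dec (w 1) k = op1 (dec (w 0) k) := by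
      intro k hk
      have h1 := hP k hk
      simpa only [Pop1, Matrix.cons_val_zero, Matrix.cons_val_one, Matrix.head_cons] using h1
    have hmm : 0 < mlen w := lt_of_lt_of_le (length_pos_of_mem_Aset (hA 0)) (le_mlen w 0)
    have hdec : dec (w 1) = fun k => op1 (dec (w 0) k) := by
      funext k
      rcases Nat.lt_or_ge k (mlen w) with hk | hk
      · exact hP' k hk
      · have e0 : dec (w 0) k = dec (w 0) (mlen w - 1) :=
          dec_high (by have := le_mlen w 0; omega) (by have := le_mlen w 0; omega)
        have e1 : dec (w 1) k = dec (w 1) (mlen w - 1) :=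
          dec_high (by have := le_mlen w 1; omega) (by have := le_mlen w 1; omega)
        rw [e0, e1]
        exact hP' (mlen w - 1) (by omega)
    refine ⟨⟨w 0, hA 0⟩, ?_⟩
    have hw1 : w 1 = (fop1 op1 ⟨w 0, hA 0⟩ : List Γ) := by
      rw [← enc_dec (hA 1)]
      exact enc_congr _ hdec
    have hwe : w = ![((⟨w 0, hA 0⟩ : ↥(Aset Γ)) : List Γ), (fop1 op1 ⟨w 0, hA 0⟩ : List Γ)] := by
      funext j
      fin_cases j
      · rfl
      · exact hw1
    rw [← hwe]

end Ops

/-! ### The equivalence with eventually constant sequences -/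

noncomputable def eqA (Γ : Type) [DecidableEq Γ] [Inhabited Γ] :
    ↥(Aset Γ) ≃ {s : ℕ → Γ // EvC s} where
  toFun a := ⟨dec a.1, evc_dec a.1⟩
  invFun s := ⟨enc s.1 s.2, enc_mem_Aset _ _⟩
  left_inv a := Subtype.ext (enc_dec a.2)
  right_inv s := Subtype.ext (dec_enc s.1 s.2)


lemma bound_of_finCofin (S : Set ℕ) (h : S.Finite ∨ Sᶜ.Finite) :
    ∃ N, ∀ n, N ≤ n → (n ∈ S ↔ N ∈ S) := by
  rcases h with h | h
  · obtain ⟨b, hb⟩ := h.bddAbove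
    refine ⟨b + 1, fun n hn => ?_⟩
    constructor
    · intro hs; exact absurd (hb hs) (by omega)
    · intro hs; exact absurd (hb hs) (by omega)
  · obtain ⟨b, hb⟩ := h.bddAbove
    refine ⟨b + 1, fun n hn => ?_⟩
    constructor
    · intro _; by_contra hN; exact absurd (hb hN) (by omega)
    · intro _; by_contra hn'; exact absurd (hb hn') (by omega)

lemma finOrCofin {i : ℕ} (s : ℕ → Fin i → Bool) (hs : EvC s) (j : Fin i) :
    {n | s n j = true}.Finite ∨ {n | s n j = true}ᶜ.Finite := by
  obtain ⟨N, hN⟩ := evc_ge hs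
  cases h : s N j with
  | false =>
    left
    apply Set.Finite.subset (Set.finite_Iio N)
    intro n hn
    rw [Set.mem_setOf_eq] at hn
    by_contra hlt
    have hle : N ≤ n := by simpa [Set.mem_Iio] using hlt
    rw [congrFun (hN n hle) j, h] at hn
    exact Bool.false_ne_true hn
  | true =>
    right
    apply Set.Finite.subset (Set.finite_Iio N)
    intro n hn
    rw [Set.mem_compl_iff, Set.mem_setOf_eq] at hn
    by_contra hlt
    have hle : N ≤ n := by simpa [Set.mem_Iio] using hlt
    rw [congrFun (hN n hle) j, h] at hn
    exact hn rfl

/-- Characteristic sequence of a tuple of (co)finite sets. -/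
noncomputable def chr (i : ℕ) (f : Fin i → FinCofin) : ℕ → Fin i → Bool :=
  fun n j => @decide (n ∈ (f j).1) (Classical.propDecidable _)

lemma chr_eq_true {i : ℕ} (f : Fin i → FinCofin) (n : ℕ) (j : Fin i) :
    chr i f n j = true ↔ n ∈ (f j).1 := by
  simp only [chr]
  exact (@decide_eq_true_eq (n ∈ (f j).1) (Classical.propDecidable _)).to_iff

lemma evc_chr (i : ℕ) (f : Fin i → FinCofin) : EvC (chr i f) := by
  choose N hN using fun j => bound_of_finCofin (f j).1 (f j).2
  refine ⟨Finset.univ.sup N, fun m => ?_⟩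
  funext j
  have h1 : N j ≤ Finset.univ.sup N := Finset.le_sup (Finset.mem_univ j)
  simp only [chr]
  exact (@decide_eq_decide _ _ (Classical.propDecidable _) (Classical.propDecidable _)).mpr
    ((hN j _ (by omega)).trans (hN j _ (by omega)).symm)

noncomputable def eqF (i : ℕ) : {s : ℕ → (Fin i → Bool) // EvC s} ≃ (Fin i → FinCofin) where
  toFun s := fun j => ⟨{n | s.1 n j = true}, finOrCofin s.1 s.2 j⟩
  invFun f := ⟨chr i f, evc_chr i f⟩
  left_inv s := by
    apply Subtype.ext
    funext n j
    exact Bool.eq_iff_iff.mpr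
      ((chr_eq_true (fun j => ⟨{n | s.1 n j = true}, finOrCofin s.1 s.2 j⟩) n j).trans Iff.rfl)
  right_inv f := by
    funext j
    apply Subtype.ext
    ext n
    exact chr_eq_true f n j

end AutoPres



open AutoPres in
/-- For every positive integer `i`, the Boolean algebra `B_{ω×i}`, the product of
`i` copies of the Boolean algebra of finite and cofinite subsets of ℕ, has an
automatic presentation. -/
theorem interval_algebra_omega_times_i_automatic (i : ℕ) (hi : 0 < i) :
    ∃ (Γ : Type) (_ : Fintype Γ) (A : Set (List Γ))
      (fsup finf : A → A → A) (fcompl : A → A) (bot top : A),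
      Language.IsRegular (A : Language Γ) ∧
      Language.IsRegular
        {w | ∃ a b : A, w = conv ![(a : List Γ), (b : List Γ), (fsup a b : List Γ)]} ∧
      Language.IsRegular
        {w | ∃ a b : A, w = conv ![(a : List Γ), (b : List Γ), (finf a b : List Γ)]} ∧
      Language.IsRegular
        {w | ∃ a : A, w = conv ![(a : List Γ), (fcompl a : List Γ)]} ∧
      ∃ e : A ≃ (Fin i → FinCofin),
        (∀ a b : A, e (fsup a b) = fun j => (e a j).union (e b j)) ∧
        (∀ a b : A, e (finf a b) = fun j => (e a j).inter (e b j)) ∧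
        (∀ a : A, e (fcompl a) = fun j => (e a j).compl) ∧
        e bot = (fun _ => FinCofin.bot) ∧
        e top = (fun _ => FinCofin.top) := by
  classical
  refine ⟨Fin i → Bool, inferInstance, Aset (Fin i → Bool),
    fop (fun x y j => x j || y j),
    fop (fun x y j => x j && y j),
    fop1 (fun x j => !(x j)),
    ⟨[fun _ => false], singleton_mem_Aset _⟩,
    ⟨[fun _ => true], singleton_mem_Aset _⟩,
    regular_Aset, ?_, ?_, ?_, ?_⟩
  · rw [lang_fop]
    exact regular_LangL _
  · rw [lang_fop]
    exact regular_LangL _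
  · rw [lang_fop1]
    exact regular_LangL _
  refine ⟨(eqA (Fin i → Bool)).trans (eqF i), ?_, ?_, ?_, ?_, ?_⟩
  · intro a b
    funext j
    apply Subtype.ext
    ext n
    have hd : dec (fop (fun x y j => x j || y j) a b).1 n j
        = (dec a.1 n j || dec b.1 n j) :=
      congrFun (congrFun (dec_fop (fun x y j => x j || y j) a b) n) j
    show dec (fop (fun x y j => x j || y j) a b).1 n j = true
      ↔ (dec a.1 n j = true ∨ dec b.1 n j = true)
    rw [hd]
    simp
  · intro a b
    funext j
    apply Subtype.ext
    ext n
    have hd : dec (fop (fun x y j => x j && y j) a b).1 n j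
        = (dec a.1 n j && dec b.1 n j) :=
      congrFun (congrFun (dec_fop (fun x y j => x j && y j) a b) n) j
    show dec (fop (fun x y j => x j && y j) a b).1 n j = true
      ↔ (dec a.1 n j = true ∧ dec b.1 n j = true)
    rw [hd]
    simp
  · intro a
    funext j
    apply Subtype.ext
    ext n
    have hd : dec (fop1 (fun x j => !(x j)) a).1 n j = (!(dec a.1 n j)) :=
      congrFun (congrFun (dec_fop1 (fun x j => !(x j)) a) n) j
    show dec (fop1 (fun x j => !(x j)) a).1 n j = true ↔ ¬(dec a.1 n j = true)
    rw [hd]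
    simp
  · funext j
    apply Subtype.ext
    ext n
    show dec [fun _ => false] n j = true ↔ n ∈ (∅ : Set ℕ)
    rw [dec_singleton]
    simp
  · funext j
    apply Subtype.ext
    ext n
    show dec [fun _ => true] n j = true ↔ n ∈ (Set.univ : Set ℕ)
    rw [dec_singleton]
    simp
end

section
/- Let (M,×) be a monoid that contains the multiplicative monoid (ℕ,×) of natural numbers as a submonoid, i.e. there is an injective monoid homomorphism from (ℕ,×) into M. Then (M,×) has no automatic presentation: there do not exist a finite alphabet Σ, a regular language A ⊆ Σ*, and a binary operation on A whose graph is a regular ternary relation, such that the resulting monoid is isomorphic to (M,×). -/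
open List

lemma conv_getElem? {α : Type*} {n : ℕ} (w : Fin n → List α) (k : ℕ) :
    (conv w)[k]? = if k < Finset.univ.sup (fun i => (w i).length) then
      some (fun i => (w i)[k]?) else none := by
  simp [conv, List.getElem?_map, List.getElem?_range]
  split <;> simp_all [List.getElem?_range]


lemma conv_inj {α : Type*} {n : ℕ} {w w' : Fin n → List α} (h : conv w = conv w') : w = w' := by
  funext i
  apply List.ext_getElem?
  intro k
  have hk := congrArg (fun l => l[k]?) h
  simp only [conv_getElem?] at hk
  by_cases h1 : k < Finset.univ.sup fun i => (w i).length
  · by_cases h2 : k < Finset.univ.sup fun i => (w' i).length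
    · rw [if_pos h1, if_pos h2] at hk
      exact congrFun (Option.some_injective _ hk) i
    · rw [if_pos h1, if_neg h2] at hk
      exact absurd hk (by simp)
  · by_cases h2 : k < Finset.univ.sup fun i => (w' i).length
    · rw [if_neg h1, if_pos h2] at hk
      exact absurd hk (by simp)
    · push_neg at h1 h2
      have l1 : (w i).length ≤ k :=
        le_trans (Finset.le_sup (f := fun i => (w i).length) (Finset.mem_univ i)) h1
      have l2 : (w' i).length ≤ k :=
        le_trans (Finset.le_sup (f := fun i => (w' i).length) (Finset.mem_univ i)) h2
      rw [List.getElem?_eq_none l1, List.getElem?_eq_none l2]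

lemma sup3 (g : Fin 3 → ℕ) : Finset.univ.sup g = max (g 0) (max (g 1) (g 2)) := by
  rw [show (Finset.univ : Finset (Fin 3)) = {0, 1, 2} from rfl]
  simp [Finset.sup_insert]

lemma conv_split {α : Type*} {x y z : List α} {m : ℕ}
    (hx : x.length ≤ m) (hy : y.length ≤ m) (hz : m ≤ z.length) :
    conv ![x, y, z] =
      conv ![x, y, z.take m] ++ (z.drop m).map (fun a => ![none, none, some a]) := by
  have s1 : (Finset.univ.sup fun i => ((![x, y, z] : Fin 3 → List α) i).length) = z.length := by
    rw [sup3]; simp; omega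
  have s2 : (Finset.univ.sup fun i => ((![x, y, z.take m] : Fin 3 → List α) i).length) = m := by
    rw [sup3]; simp; omega
  have lc : (conv ![x, y, z.take m]).length = m := by simp [conv, s2]
  apply List.ext_getElem?
  intro k
  rw [conv_getElem?, s1]
  by_cases h1 : k < m
  · rw [List.getElem?_append, lc, if_pos h1, conv_getElem?, s2, if_pos h1, if_pos (by omega)]
    congr 1
    funext i
    fin_cases i <;> simp [List.getElem?_take, h1]
  · rw [List.getElem?_append, lc, if_neg h1, List.getElem?_map, List.getElem?_drop]
    have : m + (k - m) = k := by omega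
    rw [this]
    by_cases h2 : k < z.length
    · rw [if_pos h2]
      have hv : z[k]? = some (z[k]'h2) := List.getElem?_eq_getElem h2
      rw [hv]
      simp only [Option.map_some]
      congr 1
      funext i
      fin_cases i <;>
        simp [List.getElem?_eq_none (show x.length ≤ k by omega),
          List.getElem?_eq_none (show y.length ≤ k by omega), hv]
    · rw [if_neg h2, List.getElem?_eq_none (by omega)]
      simp

lemma conv_mem_graph {Γ : Type} (A : Set (List Γ)) (mul : A → A → A) (x y : A) :
    conv ![(x : List Γ), (y : List Γ), (mul x y : List Γ)] ∈
      {w | ∃ x y : A, w = conv ![(x : List Γ), (y : List Γ), (mul x y : List Γ)]} :=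
  ⟨x, y, rfl⟩

lemma graph_length_bound {Γ : Type} {σ : Type} [Fintype σ] (N : DFA (Fin 3 → Option Γ) σ)
    (A : Set (List Γ)) (mul : A → A → A)
    (hN : N.accepts =
      {w | ∃ x y : A, w = conv ![(x : List Γ), (y : List Γ), (mul x y : List Γ)]})
    (x y : A) :
    (mul x y : List Γ).length ≤
      max (x : List Γ).length (y : List Γ).length + Fintype.card σ := by
  set c := Fintype.card σ with hc
  set m := max (x : List Γ).length (y : List Γ).length with hm
  by_contra hcon
  push_neg at hcon
  set z : List Γ := (mul x y : List Γ) with hzdef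
  have hxm : (x : List Γ).length ≤ m := le_max_left _ _
  have hym : (y : List Γ).length ≤ m := le_max_right _ _
  have hz : m ≤ z.length := by omega
  set gfun : Γ → (Fin 3 → Option Γ) := fun a => ![none, none, some a] with hgfun
  set C : List (Fin 3 → Option Γ) := conv ![(x : List Γ), (y : List Γ), z.take m] with hC
  set t : List (Fin 3 → Option Γ) := (z.drop m).map gfun with ht
  have hsplit : conv ![(x : List Γ), (y : List Γ), z] = C ++ t := conv_split hxm hym hz
  have htlen : t.length = z.length - m := by simp [ht]
  have hacc : conv ![(x : List Γ), (y : List Γ), z] ∈ N.accepts := by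
    rw [hN]; exact ⟨x, y, rfl⟩
  set s0 : σ := N.evalFrom N.start C with hs0
  set F : Fin (c + 1) → σ := fun k => N.evalFrom s0 (t.take k.1) with hF
  obtain ⟨a, b, hab, hFab⟩ := Fintype.exists_ne_map_eq_of_card_lt F (by simp [hc])
  set i : ℕ := min a.1 b.1 with hi
  set j : ℕ := max a.1 b.1 with hj
  have hij : i < j := by
    have : a.1 ≠ b.1 := fun h => hab (Fin.ext h)
    omega
  have hjc : j ≤ c := by
    have := a.2; have := b.2; omega
  have key : N.evalFrom s0 (t.take i) = N.evalFrom s0 (t.take j) := by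
    rcases le_total a.1 b.1 with h | h
    · have h1 : i = a.1 := by omega
      have h2 : j = b.1 := by omega
      rw [h1, h2]; exact hFab
    · have h1 : i = b.1 := by omega
      have h2 : j = a.1 := by omega
      rw [h1, h2]; exact hFab.symm
  set u : List (Fin 3 → Option Γ) := C ++ (t.take i ++ t.drop j) with hu
  have huacc : u ∈ N.accepts := by
    rw [DFA.mem_accepts] at hacc ⊢
    have e1 : N.eval u = N.evalFrom (N.evalFrom s0 (t.take i)) (t.drop j) := by
      rw [hu]
      show N.evalFrom N.start _ = _
      rw [DFA.evalFrom_of_append, DFA.evalFrom_of_append, hs0]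
    have e2 : N.eval (conv ![(x : List Γ), (y : List Γ), z]) =
        N.evalFrom (N.evalFrom s0 (t.take j)) (t.drop j) := by
      rw [hsplit]
      show N.evalFrom N.start _ = _
      rw [DFA.evalFrom_of_append, ← hs0]
      conv_lhs => rw [← List.take_append_drop j t]
      rw [DFA.evalFrom_of_append]
    rw [e1, key, ← e2]
    exact hacc
  set z' : List Γ := z.take (m + i) ++ z.drop (m + j) with hz'
  have hmi : m + i ≤ z.length := by omega
  have hmj : m + j ≤ z.length := by omega
  have hz'len : z'.length = z.length - (j - i) := by
    simp [hz', List.length_take, List.length_drop]; omega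
  have hz'm : m ≤ z'.length := by omega
  have htake : z'.take m = z.take m := by
    rw [hz', List.take_append_of_le_length (by simp [List.length_take]; omega),
      List.take_take, min_eq_left (by omega)]
  have hdrop : z'.drop m = (z.drop m).take i ++ z.drop (m + j) := by
    rw [hz', List.drop_append_of_le_length (by simp [List.length_take]; omega),
      List.drop_take]
    congr 2
    omega
  have huconv : u = conv ![(x : List Γ), (y : List Γ), z'] := by
    rw [conv_split hxm hym hz'm, htake, hdrop, List.map_append, hu, ht]
    simp only [← hgfun, List.map_take, List.map_drop, List.drop_drop]
    rfl
  rw [hN] at huacc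
  obtain ⟨x', y', hxy'⟩ := huacc
  have hvec := conv_inj (hxy'.symm.trans huconv)
  have hx' : (x' : List Γ) = (x : List Γ) := congrFun hvec 0
  have hy' : (y' : List Γ) = (y : List Γ) := congrFun hvec 1
  have hmulz : (mul x' y' : List Γ) = z' := congrFun hvec 2
  have hxx : x' = x := Subtype.ext hx'
  have hyy : y' = y := Subtype.ext hy'
  rw [hxx, hyy] at hmulz
  have : z = z' := hmulz
  have : z.length = z'.length := by rw [this]
  omega

lemma prod_pow_nth_prime_inj {r : ℕ} {a b : Fin r → ℕ}
    (h : ∏ i : Fin r, Nat.nth Nat.Prime (i : ℕ) ^ a i = ∏ i : Fin r, Nat.nth Nat.Prime (i : ℕ) ^ b i) : a = b := by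
  have hinj : Function.Injective (Nat.nth Nat.Prime) :=
    Nat.nth_injective Nat.infinite_setOf_prime
  funext j
  have hp : ∀ m : ℕ, (Nat.nth Nat.Prime m).Prime := Nat.prime_nth_prime
  have hfact := congrArg Nat.factorization h
  rw [Nat.factorization_prod (g := fun i : Fin r => Nat.nth Nat.Prime (i : ℕ) ^ a i)
      (fun i _ => pow_ne_zero _ (hp (i : ℕ)).pos.ne'),
    Nat.factorization_prod (g := fun i : Fin r => Nat.nth Nat.Prime (i : ℕ) ^ b i)
      (fun i _ => pow_ne_zero _ (hp (i : ℕ)).pos.ne')] at hfact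
  have hj := congrArg (fun gg => gg (Nat.nth Nat.Prime (j : ℕ))) hfact
  simp only [Finsupp.coe_finset_sum, Finset.sum_apply,
    Nat.Prime.factorization_pow (hp _), Finsupp.single_apply, hinj.eq_iff, Fin.val_inj,
    Finset.sum_ite_eq', Finset.mem_univ, if_true] at hj
  exact hj

/-- A monoid containing `(ℕ, ×)` as a submonoid has no automatic presentation:
there are no finite alphabet, regular domain of words, and multiplication with
regular graph such that the resulting monoid is isomorphic to `M`. -/
theorem monoid_containing_nat_mul_not_automatic
    (M : Type*) [Monoid M] (f : ℕ →* M) (hf : Function.Injective f) :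
    ¬ ∃ (Γ : Type) (_ : Fintype Γ) (A : Set (List Γ)) (mul : A → A → A)
        (e : M ≃ A),
        Language.IsRegular (A : Language Γ) ∧
        Language.IsRegular
          {w | ∃ x y : A, w = conv ![(x : List Γ), (y : List Γ), (mul x y : List Γ)]} ∧
        ∀ x y : M, e (x * y) = mul (e x) (e y) := by
  rintro ⟨Γ, _, A, mul, e, -, ⟨σ, _, N, hN⟩, hmul⟩
  classical
  have hlen : ∀ x y : A, (mul x y : List Γ).length ≤
      max (x : List Γ).length (y : List Γ).length + Fintype.card σ :=
    graph_length_bound N A mul hN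
  set c := Fintype.card σ with hcdef
  have hc1 : 1 ≤ c := @Fintype.card_pos σ _ ⟨N.start⟩
  set g := Fintype.card Γ with hgdef
  set p : ℕ → ℕ := Nat.nth Nat.Prime with hpdef
  set r : ℕ := (g + 1) * c + 1 with hrdef
  set ℓ : ℕ := max (Finset.univ.sup fun i : Fin r => ((e (f (p (i : ℕ))) : List Γ)).length)
      ((e 1 : List Γ)).length with hldef
  have hℓ1 : ((e 1 : List Γ)).length ≤ ℓ := hldef ▸ le_max_right _ _
  have hℓp : ∀ i : Fin r, ((e (f (p (i : ℕ))) : List Γ)).length ≤ ℓ := fun i =>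
    hldef ▸ le_trans
      (Finset.le_sup (f := fun i : Fin r => ((e (f (p (i : ℕ))) : List Γ)).length)
        (Finset.mem_univ i)) (le_max_left _ _)
  -- balanced tree length bound
  have tree : ∀ (D : ℕ) (l : List M), l.length ≤ 2 ^ D →
      (∀ x ∈ l, ((e x : List Γ)).length ≤ ℓ) →
      ((e l.prod : List Γ)).length ≤ ℓ + c * D := by
    intro D
    induction D with
    | zero =>
      intro l hl hmem
      rcases l with _ | ⟨a, _ | ⟨b, l⟩⟩
      · simpa using hℓ1
      · simpa using hmem a (by simp)
      · simp at hl
    | succ D ih =>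
      intro l hl hmem
      have hp2 : l.prod = (l.take (2 ^ D)).prod * (l.drop (2 ^ D)).prod := by
        rw [← List.prod_append, List.take_append_drop]
      have h1 : ((e (l.take (2 ^ D)).prod : List Γ)).length ≤ ℓ + c * D :=
        ih _ (by simp) (fun x hx => hmem x (List.mem_of_mem_take hx))
      have h2 : ((e (l.drop (2 ^ D)).prod : List Γ)).length ≤ ℓ + c * D := by
        apply ih _ ?_ (fun x hx => hmem x (List.mem_of_mem_drop hx))
        have h2d : (2 : ℕ) ^ (D + 1) = 2 ^ D + 2 ^ D := by ring
        simp only [List.length_drop]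
        omega
      rw [hp2, hmul]
      calc ((mul (e (l.take (2 ^ D)).prod) (e (l.drop (2 ^ D)).prod) : List Γ)).length
          ≤ max ((e (l.take (2 ^ D)).prod : List Γ)).length
              ((e (l.drop (2 ^ D)).prod : List Γ)).length + c := hlen _ _
        _ ≤ (ℓ + c * D) + c := Nat.add_le_add_right (max_le h1 h2) c
        _ = ℓ + c * (D + 1) := by ring
  -- counting estimate
  have count : ∀ d : ℕ, 2 ^ (d * r) ≤ (g + 1) ^ (ℓ + c * (r + d)) := by
    intro d
    set s : ℕ := ℓ + c * (r + d) with hsdef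
    set Na : (Fin r → Fin (2 ^ d)) → ℕ :=
      fun a => ∏ i : Fin r, p (i : ℕ) ^ ((a i) : ℕ) with hNadef
    have hNainj : Function.Injective Na := by
      intro a b hab
      have h := prod_pow_nth_prime_inj
        (a := fun i => ((a i) : ℕ)) (b := fun i => ((b i) : ℕ)) hab
      funext i
      exact Fin.ext (congrFun h i)
    have hWlen : ∀ a, ((e (f (Na a)) : List Γ)).length ≤ s := by
      intro a
      set lN : List ℕ :=
        (List.ofFn fun i : Fin r => List.replicate ((a i) : ℕ) (p (i : ℕ))).flatten with hlNdef
      have hprodN : lN.prod = Na a := by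
        rw [hlNdef, List.prod_flatten, List.map_ofFn]
        rw [show (List.prod ∘ fun i : Fin r => List.replicate ((a i) : ℕ) (p (i : ℕ)))
            = fun i : Fin r => p (i : ℕ) ^ ((a i) : ℕ) from
          funext fun i => List.prod_replicate _ _]
        rw [List.prod_ofFn]
      have hprodM : (lN.map f).prod = f (Na a) := by
        rw [← map_list_prod f lN, hprodN]
      have hlenN : (lN.map f).length ≤ 2 ^ (r + d) := by
        rw [List.length_map, hlNdef, List.length_flatten, List.map_ofFn]
        rw [show (List.length ∘ fun i : Fin r => List.replicate ((a i) : ℕ) (p (i : ℕ)))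
            = fun i : Fin r => ((a i) : ℕ) from funext fun i => List.length_replicate]
        rw [List.sum_ofFn]
        have hb : ∑ i : Fin r, ((a i) : ℕ) ≤ r * 2 ^ d := by
          calc ∑ i : Fin r, ((a i) : ℕ) ≤ Finset.univ.card • 2 ^ d :=
              Finset.sum_le_card_nsmul _ _ _ (fun i _ => le_of_lt (a i).2)
            _ = r * 2 ^ d := by simp [mul_comm]
        have hr2 : r ≤ 2 ^ r := (Nat.lt_two_pow_self (n := r)).le
        calc ∑ i : Fin r, ((a i) : ℕ) ≤ r * 2 ^ d := hb
          _ ≤ 2 ^ r * 2 ^ d := Nat.mul_le_mul_right _ hr2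
          _ = 2 ^ (r + d) := (pow_add 2 r d).symm
      have hmemN : ∀ x ∈ lN.map f, ((e x : List Γ)).length ≤ ℓ := by
        intro x hx
        obtain ⟨q, hq, rfl⟩ := List.mem_map.mp hx
        rw [hlNdef] at hq
        obtain ⟨L, hL, hqL⟩ := List.mem_flatten.mp hq
        obtain ⟨i, rfl⟩ := List.mem_ofFn.mp hL
        rw [List.eq_of_mem_replicate hqL]
        exact hℓp i
      have htr := tree (r + d) (lN.map f) hlenN hmemN
      rw [hprodM] at htr
      exact htr
    have hinj : Function.Injective (fun (a : Fin r → Fin (2 ^ d)) (k : Fin s) =>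
        ((e (f (Na a)) : List Γ))[(k : ℕ)]?) := by
      intro a b hab
      apply hNainj
      apply hf
      apply e.injective
      apply Subtype.ext
      apply List.ext_getElem?
      intro k
      by_cases hk : k < s
      · exact congrFun hab ⟨k, hk⟩
      · rw [List.getElem?_eq_none (le_trans (hWlen a) (le_of_not_gt hk)),
          List.getElem?_eq_none (le_trans (hWlen b) (le_of_not_gt hk))]
    calc 2 ^ (d * r) = Fintype.card (Fin r → Fin (2 ^ d)) := by
          rw [Fintype.card_fun]
          simp [← pow_mul, mul_comm]
      _ ≤ Fintype.card (Fin s → Option Γ) := Fintype.card_le_of_injective _ hinj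
      _ = (g + 1) ^ s := by
          rw [Fintype.card_fun]
          simp [hgdef]
  -- final arithmetic contradiction
  have pow_ineq : ∀ d : ℕ, d * r ≤ (g + 1) * (ℓ + c * (r + d)) := by
    intro d
    have h1 := count d
    have h2 : (g + 1) ^ (ℓ + c * (r + d)) ≤ 2 ^ ((g + 1) * (ℓ + c * (r + d))) := by
      calc (g + 1) ^ (ℓ + c * (r + d)) ≤ (2 ^ (g + 1)) ^ (ℓ + c * (r + d)) :=
          Nat.pow_le_pow_left (Nat.lt_two_pow_self (n := g + 1)).le _
        _ = 2 ^ ((g + 1) * (ℓ + c * (r + d))) := (pow_mul 2 (g + 1) _).symm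
    exact (Nat.pow_le_pow_iff_right one_lt_two).mp (h1.trans h2)
  set L : ℕ := (g + 1) * (ℓ + c * r) with hLdef
  set d : ℕ := L + 1 with hddef
  have h := pow_ineq d
  have e1 : d * r = (g + 1) * c * d + d := by rw [hrdef]; ring
  have e2 : (g + 1) * (ℓ + c * (r + d)) = L + (g + 1) * c * d := by rw [hLdef]; ring
  rw [e1, e2] at h
  omega
end

section
/- The multiplicative group (ℚ⁺,×) of positive rational numbers has no automatic presentation: there do not exist a finite alphabet Σ, a regular language A ⊆ Σ*, and a binary operation on A whose graph is a regular ternary relation, such that the resulting structure is a group isomorphic to (ℚ⁺,×). -/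
namespace AutoAux
variable {α : Type*} {n : ℕ}

lemma conv_length (w : Fin n → List α) :
    (conv w).length = Finset.univ.sup fun i => (w i).length := by
  simp [conv]

lemma conv_getElem? (w : Fin n → List α) (k : ℕ)
    (hk : k < Finset.univ.sup fun i => (w i).length) :
    (conv w)[k]? = some fun i => (w i)[k]? := by
  simp [conv, List.getElem?_map, List.getElem?_range hk]

lemma conv_injective : Function.Injective fun w : Fin n → List α => conv w := by
  intro w w' h
  simp only at h
  have hS : (Finset.univ.sup fun i => (w i).length) = Finset.univ.sup fun i => (w' i).length := by
    have := congrArg List.length h; simpa [conv] using this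
  funext i
  apply List.ext_getElem?
  intro k
  by_cases hk : k < Finset.univ.sup fun i => (w i).length
  · have h1 := conv_getElem? w k hk
    have h2 := conv_getElem? w' k (hS ▸ hk)
    rw [h, h2] at h1
    exact congrFun (Option.some.inj h1.symm) i
  · push_neg at hk
    have l1 : (w i).length ≤ k := le_trans (Finset.le_sup (f := fun i => (w i).length) (Finset.mem_univ i)) hk
    have l2 : (w' i).length ≤ k := le_trans (Finset.le_sup (f := fun i => (w' i).length) (Finset.mem_univ i)) (hS ▸ hk)
    rw [List.getElem?_eq_none l1, List.getElem?_eq_none l2]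

lemma sup3 (x y z : List α) (hx : x.length ≤ z.length) (hy : y.length ≤ z.length) :
    (Finset.univ.sup fun i => ((![x,y,z]) i).length) = z.length := by
  apply le_antisymm
  · apply Finset.sup_le
    intro i _
    fin_cases i <;> simp [hx, hy]
  · exact Finset.le_sup (f := fun i => ((![x,y,z]) i).length) (Finset.mem_univ 2)

lemma conv_surgery (x y z : List α) (a b : ℕ)
    (hax : x.length ≤ a) (hay : y.length ≤ a) (hab : a ≤ b) (hbz : b ≤ z.length) :
    (conv ![x,y,z]).take a ++ (conv ![x,y,z]).drop b
      = conv ![x, y, z.take a ++ z.drop b] := by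
  have hxz : x.length ≤ z.length := le_trans hax (le_trans hab hbz)
  have hyz : y.length ≤ z.length := le_trans hay (le_trans hab hbz)
  have haz : a ≤ z.length := le_trans hab hbz
  set z' := z.take a ++ z.drop b with hz'
  have hz'len : z'.length = a + (z.length - b) := by
    simp [hz', List.length_take, List.length_drop, Nat.min_eq_left haz]
  have hxz' : x.length ≤ z'.length := by omega
  have hyz' : y.length ≤ z'.length := by omega
  have hS : (Finset.univ.sup fun i => ((![x,y,z]) i).length) = z.length := sup3 x y z hxz hyz
  have hS' : (Finset.univ.sup fun i => ((![x,y,z']) i).length) = z'.length := sup3 x y z' hxz' hyz'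
  have hclen : (conv ![x,y,z]).length = z.length := by rw [conv_length, hS]
  have htakelen : ((conv ![x,y,z]).take a).length = a := by
    rw [List.length_take, hclen]; omega
  apply List.ext_getElem?
  intro k
  by_cases hk : k < a
  · -- left part
    rw [List.getElem?_append (l₁ := (conv ![x,y,z]).take a)]
    rw [htakelen, if_pos hk, List.getElem?_take, if_pos hk]
    rw [conv_getElem? _ k (by omega), conv_getElem? _ k (by rw [hS']; omega)]
    congr 1
    funext i
    fin_cases i
    · rfl
    · rfl
    · show z[k]? = z'[k]?
      rw [hz', List.getElem?_append (l₁ := z.take a), List.length_take,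
        Nat.min_eq_left haz, if_pos hk, List.getElem?_take, if_pos hk]
  · push_neg at hk
    by_cases hk2 : k < z'.length
    · rw [List.getElem?_append_right (by rw [htakelen]; exact hk), htakelen,
        List.getElem?_drop]
      have hidx : b + (k - a) < z.length := by omega
      rw [conv_getElem? _ _ (by rw [hS]; omega), conv_getElem? _ k (by rw [hS']; omega)]
      congr 1
      funext i
      fin_cases i
      · show x[b + (k-a)]? = x[k]?
        rw [List.getElem?_eq_none (by omega), List.getElem?_eq_none (by omega)]
      · show y[b + (k-a)]? = y[k]?
        rw [List.getElem?_eq_none (by omega), List.getElem?_eq_none (by omega)]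
      · show z[b + (k-a)]? = z'[k]?
        rw [hz', List.getElem?_append_right (by rw [List.length_take]; omega),
          List.length_take, Nat.min_eq_left haz, List.getElem?_drop]
    · push_neg at hk2
      have hlenL : ((conv ![x,y,z]).take a ++ (conv ![x,y,z]).drop b).length = z'.length := by
        rw [List.length_append, htakelen, List.length_drop, hclen]; omega
      rw [List.getElem?_eq_none (by omega), List.getElem?_eq_none (by rw [conv_length, hS']; omega)]
end AutoAux

namespace AutoAux

lemma mul_length_bound {Γ : Type} [Fintype Γ] {A : Set (List Γ)} (mul : A → A → A)
    (hreg : Language.IsRegular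
      {w | ∃ x y : A, w = conv ![(x : List Γ), (y : List Γ), (mul x y : List Γ)]}) :
    ∃ C : ℕ, ∀ x y : A,
      (mul x y : List Γ).length ≤ max (x : List Γ).length (y : List Γ).length + C := by
  obtain ⟨σ, fσ, M, hM⟩ := hreg
  refine ⟨Fintype.card σ, ?_⟩
  intro x y
  by_contra hbig
  push_neg at hbig
  set C := Fintype.card σ with hC
  set z : List Γ := (mul x y : List Γ) with hz
  set M0 := max (x : List Γ).length (y : List Γ).length with hM0
  have hxz : (x : List Γ).length ≤ z.length := by omega
  have hyz : (y : List Γ).length ≤ z.length := by omega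
  set w : List (Fin 3 → Option Γ) := conv ![(x : List Γ), (y : List Γ), z] with hw
  have hwlen : w.length = z.length := by
    rw [hw, conv_length, sup3 _ _ _ hxz hyz]
  have hwacc : w ∈ M.accepts := by rw [hM]; exact ⟨x, y, rfl⟩
  set head := w.take M0 with hhead
  set tail := w.drop M0 with htail
  set s := M.evalFrom M.start head with hs
  have key : ∀ u v : Fin (C+1), (u : ℕ) < (v : ℕ) →
      M.evalFrom s (tail.take u) = M.evalFrom s (tail.take v) → False := by
    intro u v huv hg
    set j1 := (u : ℕ)
    set j2 := (v : ℕ)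
    have hj2 : j2 ≤ C := Nat.lt_succ_iff.mp v.isLt
    set z' := z.take (M0 + j1) ++ z.drop (M0 + j2) with hz'
    set w' := head ++ (tail.take j1 ++ tail.drop j2) with hw'
    -- w' is accepted
    have hacc' : w' ∈ M.accepts := by
      rw [DFA.mem_accepts]
      have e1 : M.eval w' = M.evalFrom s (tail.take j1 ++ tail.drop j2) := by
        rw [hw', DFA.eval, DFA.evalFrom_of_append]
      have e2 : M.evalFrom s (tail.take j1 ++ tail.drop j2) = M.evalFrom s tail := by
        rw [DFA.evalFrom_of_append, hg, ← DFA.evalFrom_of_append, List.take_append_drop]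
      have e3 : M.eval w = M.evalFrom s tail := by
        conv_lhs => rw [← List.take_append_drop M0 w]
        rw [DFA.eval, DFA.evalFrom_of_append]
      rw [e1, e2, ← e3]
      exact (DFA.mem_accepts M).mp hwacc
    -- w' as a conv of x, y, z'
    have hw'conv : w' = conv ![(x : List Γ), (y : List Γ), z'] := by
      have : w' = w.take (M0 + j1) ++ w.drop (M0 + j2) := by
        rw [hw', hhead, htail, List.take_add, List.drop_drop]
        simp [List.append_assoc]
      rw [this, hw]
      exact conv_surgery _ _ _ _ _ (le_trans (le_max_left _ _) (Nat.le_add_right _ _))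
        (le_trans (le_max_right _ _) (Nat.le_add_right _ _))
        (by omega) (by omega)
    -- w' is in the language
    have hmem : w' ∈ {w | ∃ x y : A, w = conv ![(x : List Γ), (y : List Γ), (mul x y : List Γ)]} := by
      rw [← hM]; exact hacc'
    obtain ⟨x2, y2, hx2⟩ := hmem
    rw [hw'conv] at hx2
    have hfun := conv_injective hx2.symm
    have hxx : (x2 : List Γ) = (x : List Γ) := by simpa using congrFun hfun 0
    have hyy : (y2 : List Γ) = (y : List Γ) := by simpa using congrFun hfun 1
    have hzz : (mul x2 y2 : List Γ) = z' := by simpa using congrFun hfun 2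
    have hx2' : x2 = x := Subtype.ext hxx
    have hy2' : y2 = y := Subtype.ext hyy
    rw [hx2', hy2'] at hzz
    have hlen' : z'.length = z.length := by rw [← hzz]
    rw [hz', List.length_append, List.length_take, List.length_drop,
      Nat.min_eq_left (by omega)] at hlen'
    omega
  have hcard : Fintype.card σ < Fintype.card (Fin (C+1)) := by simp [hC]
  obtain ⟨u, v, huv, hg⟩ := Fintype.exists_ne_map_eq_of_card_lt
    (fun j : Fin (C+1) => M.evalFrom s (tail.take j)) hcard
  rcases (Ne.lt_or_gt huv) with h | h
  · exact key u v h hg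
  · exact key v u h hg.symm

end AutoAux

namespace AutoAux

section LenBounds
variable {G : Type*} [CommMonoid G] (len : G → ℕ) (C : ℕ)
  (hlen : ∀ x y : G, len (x * y) ≤ max (len x) (len y) + C)

include hlen in
lemma len_pow : ∀ (n : ℕ) (x : G) (k : ℕ), 1 ≤ k → k ≤ 2^n →
    len (x ^ k) ≤ len x + 2*C*n := by
  intro n
  induction n with
  | zero =>
    intro x k h1 h2
    have : k = 1 := by simpa using le_antisymm h2 h1
    simp [this]
  | succ n ih =>
    intro x k h1 h2
    rcases eq_or_lt_of_le h1 with h | h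
    · simp [← h]
    · set q := k / 2 with hq
      set r := k % 2 with hr
      have hk2 : 2 ≤ k := h
      have hq1 : 1 ≤ q := Nat.le_div_iff_mul_le (by norm_num) |>.mpr (by omega)
      have hq2 : q ≤ 2^n := by
        have : k ≤ 2^(n+1) := h2
        rw [pow_succ] at this
        omega
      have hkeq : k = q + q + r := by omega
      have hxk : x ^ k = x ^ q * x ^ q * x ^ r := by
        rw [← pow_add, ← pow_add, ← hkeq]
      have hb : len (x ^ q) ≤ len x + 2*C*n := ih x q hq1 hq2
      have hsq : len (x ^ q * x ^ q) ≤ len x + 2*C*n + C :=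
        le_trans (hlen _ _) (by omega)
      rw [hxk]
      have hr2 : r = 0 ∨ r = 1 := by omega
      rcases hr2 with h0 | h0
      · rw [h0, pow_zero, mul_one]
        calc len (x^q * x^q) ≤ len x + 2*C*n + C := hsq
        _ ≤ len x + 2*C*(n+1) := by rw [Nat.mul_succ]; omega
      · rw [h0, pow_one]
        calc len (x^q * x^q * x) ≤ max (len (x^q*x^q)) (len x) + C := hlen _ _
        _ ≤ (len x + 2*C*n + C) + C :=
            Nat.add_le_add_right (max_le hsq (by omega)) C
        _ ≤ len x + 2*C*(n+1) := by rw [Nat.mul_succ]; omega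

include hlen in
lemma len_prod : ∀ (m : ℕ) (f : Fin (m+1) → G) (L : ℕ), (∀ i, len (f i) ≤ L) →
    len (∏ i, f i) ≤ L + C*(m+1) := by
  intro m
  induction m with
  | zero =>
    intro f L hf
    rw [Fin.prod_univ_one]
    exact le_trans (hf 0) (by omega)
  | succ m ih =>
    intro f L hf
    rw [Fin.prod_univ_succ]
    calc len (f 0 * ∏ i : Fin (m+1), f i.succ)
        ≤ max (len (f 0)) (len (∏ i : Fin (m+1), f i.succ)) + C := hlen _ _
      _ ≤ (L + C*(m+1)) + C := by
          have h2 := ih (fun i => f i.succ) L (fun i => hf i.succ)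
          exact Nat.add_le_add_right (max_le (le_trans (hf 0) (Nat.le_add_right _ _)) h2) C
      _ ≤ L + C*(m+1+1) := by have : C*(m+1+1) = C*(m+1) + C := by ring
                              omega

end LenBounds

lemma prime_pow_prod_inj (m : ℕ) (a b : Fin m → ℕ)
    (h : ∏ i : Fin m, (Nat.nth Nat.Prime (i : ℕ)) ^ (a i)
       = ∏ i : Fin m, (Nat.nth Nat.Prime (i : ℕ)) ^ (b i)) :
    a = b := by
  have hp : ∀ i : Fin m, Nat.Prime (Nat.nth Nat.Prime i) := fun i => Nat.prime_nth_prime i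
  have hpinj : ∀ i j : Fin m, Nat.nth Nat.Prime (i : ℕ) = Nat.nth Nat.Prime (j : ℕ) → i = j :=
    fun i j hij => Fin.ext (Nat.nth_injective Nat.infinite_setOf_prime hij)
  have key : ∀ (c : Fin m → ℕ) (j : Fin m),
      (∏ i : Fin m, (Nat.nth Nat.Prime (i : ℕ)) ^ (c i)).factorization
        (Nat.nth Nat.Prime (j : ℕ)) = c j := by
    intro c j
    rw [Nat.factorization_prod (fun i _ => pow_ne_zero _ (hp i).ne_zero)]
    rw [Finsupp.finset_sum_apply]
    rw [Finset.sum_eq_single j]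
    · rw [Nat.factorization_pow, Finsupp.smul_apply, (hp j).factorization,
        Finsupp.single_eq_same]
      simp
    · intro i _ hij
      rw [Nat.factorization_pow, Finsupp.smul_apply, (hp i).factorization,
        Finsupp.single_eq_of_ne' (fun hh => hij (hpinj i j hh))]
      simp
    · simp
  funext j
  rw [← key a j, ← key b j, h]

def posCoe : {q : ℚ // 0 < q} →* ℚ where
  toFun := Subtype.val
  map_one' := rfl
  map_mul' _ _ := rfl

end AutoAux


/-- The multiplicative group `(ℚ⁺, ×)` of positive rationals has no automatic
presentation. -/
theorem rat_pos_mul_not_automatic :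
    ¬ ∃ (Γ : Type) (_ : Fintype Γ) (A : Set (List Γ)) (mul : A → A → A)
        (e : {q : ℚ // 0 < q} ≃ A),
        Language.IsRegular (A : Language Γ) ∧
        Language.IsRegular
          {w | ∃ x y : A, w = conv ![(x : List Γ), (y : List Γ), (mul x y : List Γ)]} ∧
        ∀ x y : {q : ℚ // 0 < q}, e (x * y) = mul (e x) (e y) := by
  rintro ⟨Γ, instΓ, A, mul, e, hA, hrel, hhom⟩
  obtain ⟨C, hC⟩ := AutoAux.mul_length_bound mul hrel
  set len : {q : ℚ // 0 < q} → ℕ := fun g => (e g : List Γ).length with hlendef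
  have hlen : ∀ x y : {q : ℚ // 0 < q}, len (x*y) ≤ max (len x) (len y) + C := by
    intro x y
    show (e (x*y) : List Γ).length ≤ _
    rw [hhom]
    exact hC (e x) (e y)
  set K := Fintype.card Γ with hK
  set b := K + 1 with hb
  set mm := b * (2*C+1) with hmm
  set p : Fin (mm+1) → ℕ := fun i => Nat.nth Nat.Prime (i : ℕ) with hpdef
  have hp : ∀ i, Nat.Prime (p i) := fun i => Nat.prime_nth_prime i
  set qp : Fin (mm+1) → {q : ℚ // 0 < q} :=
    fun i => ⟨(p i : ℚ), by exact_mod_cast (hp i).pos⟩ with hqpdef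
  set L := Finset.univ.sup fun i => len (qp i) with hL
  set n := L + C*(mm+1) + 2 with hn
  set N := L + 2*C*n + C*(mm+1) with hN
  set P : (Fin (mm+1) → Fin (2^n)) → {q : ℚ // 0 < q} :=
    fun v => ∏ i, qp i ^ ((v i : ℕ) + 1) with hPdef
  have hPlen : ∀ v, len (P v) ≤ N := by
    intro v
    have hf : ∀ i, len (qp i ^ ((v i : ℕ) + 1)) ≤ L + 2*C*n := by
      intro i
      have h1 := AutoAux.len_pow len C hlen n (qp i) ((v i : ℕ) + 1)
        (Nat.le_add_left 1 _) (by have := (v i).isLt; omega)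
      have h2 : len (qp i) ≤ L := Finset.le_sup (f := fun i => len (qp i)) (Finset.mem_univ i)
      omega
    have h9 := AutoAux.len_prod len C hlen mm (fun i => qp i ^ ((v i : ℕ) + 1)) (L + 2*C*n) hf
    have h10 : len (P v) ≤ (L + 2*C*n) + C*(mm+1) := by
      rw [hPdef]
      exact le_trans (le_of_eq (congrArg len (Finset.prod_congr rfl fun i _ => rfl))) h9
    rw [hN]
    omega
  have hPinj : Function.Injective P := by
    intro v v' hPv
    have h1 : AutoAux.posCoe (P v) = AutoAux.posCoe (P v') := congrArg _ hPv
    have hval : ∀ v0 : Fin (mm+1) → Fin (2^n),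
        AutoAux.posCoe (P v0) = ((∏ i, p i ^ ((v0 i : ℕ) + 1) : ℕ) : ℚ) := by
      intro v0
      rw [hPdef]
      simp only [map_prod, map_pow]
      push_cast
      rfl
    rw [hval, hval] at h1
    have h2 : (∏ i, p i ^ ((v i : ℕ) + 1)) = ∏ i, p i ^ ((v' i : ℕ) + 1) :=
      Nat.cast_injective h1
    have h3 := AutoAux.prime_pow_prod_inj (mm+1)
      (fun i => (v i : ℕ) + 1) (fun i => (v' i : ℕ) + 1) h2
    funext i
    have := congrFun h3 i
    exact Fin.ext (by omega)
  set F : (Fin (mm+1) → Fin (2^n)) → (Fin (N+1) → Option Γ) :=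
    fun v j => (e (P v) : List Γ)[(j : ℕ)]? with hF
  have hFinj : Function.Injective F := by
    intro v v' hFv
    apply hPinj
    apply e.injective
    apply Subtype.ext
    apply List.ext_getElem?
    intro k
    by_cases hk : k < N + 1
    · exact congrFun hFv ⟨k, hk⟩
    · rw [List.getElem?_eq_none (le_trans (hPlen v) (by omega)),
        List.getElem?_eq_none (le_trans (hPlen v') (by omega))]
  have hcard := Fintype.card_le_of_injective F hFinj
  rw [Fintype.card_fun, Fintype.card_fun, Fintype.card_fin, Fintype.card_fin,
    Fintype.card_option, Fintype.card_fin] at hcard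
  -- hcard : (2^n)^(mm+1) ≤ (K+1)^(N+1)
  have h2 : (2:ℕ)^(n*(mm+1)) ≤ 2^(b*(N+1)) := by
    calc (2:ℕ)^(n*(mm+1)) = (2^n)^(mm+1) := by rw [pow_mul]
    _ ≤ (K+1)^(N+1) := hcard
    _ ≤ (2^b)^(N+1) := Nat.pow_le_pow_left (by rw [hb]; exact (Nat.lt_two_pow_self (n := K+1)).le) _
    _ = 2^(b*(N+1)) := by rw [← pow_mul]
  have h3 : n*(mm+1) ≤ b*(N+1) := (Nat.pow_le_pow_iff_right (by norm_num)).mp h2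
  have e1 : n * (mm+1) = 2*C*b*n + b*n + n := by rw [hmm]; ring
  have e2 : b*(N+1) = 2*C*b*n + b*(L + C*(mm+1) + 1) := by rw [hN]; ring
  have e3 : b*n = b*(L + C*(mm+1) + 1) + b := by rw [hn]; ring
  have hb1 : 1 ≤ b := by omega
  omega
end

section
/- The random graph has no automatic presentation. More precisely, there do not exist a finite alphabet Σ, a regular language A ⊆ Σ*, and a symmetric irreflexive binary relation E on A whose convolution is a regular language, such that the graph (A,E) satisfies the random-graph extension property: for every finite set Y ⊆ A of vertices and every partition of Y into disjoint sets X₁ and X₂, there exists a vertex y ∈ A with (y,x) ∈ E for every x ∈ X₁ and (y,x) ∉ E for every x ∈ X₂. -/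
lemma sup_fin2 (f : Fin 2 → ℕ) :
    (Finset.univ.sup f) = max (f 0) (f 1) := by
  apply le_antisymm
  · apply Finset.sup_le
    intro i _
    fin_cases i
    · exact le_max_left _ _
    · exact le_max_right _ _
  · apply max_le <;> exact Finset.le_sup (Finset.mem_univ _)

lemma conv_pair {α : Type*} (x v : List α) :
    conv ![x, v] = (List.range (max x.length v.length)).map
      (fun k => ![x[k]?, v[k]?]) := by
  unfold conv
  rw [show (Finset.univ.sup fun i => ((![x, v]) i).length) = max x.length v.length by
    rw [sup_fin2 (fun i => ((![x, v]) i).length)]; simp]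
  apply List.map_congr_left
  intro k _
  funext i
  fin_cases i <;> simp

lemma conv_pair_inj {α : Type*} {x v x' v' : List α}
    (h : conv ![x, v] = conv ![x', v']) : x = x' ∧ v = v' := by
  rw [conv_pair, conv_pair] at h
  have hlen : max x.length v.length = max x'.length v'.length := by
    have := congrArg List.length h
    simpa using this
  have key : ∀ k : ℕ, x[k]? = x'[k]? ∧ v[k]? = v'[k]? := by
    intro k
    by_cases hk : k < max x.length v.length
    · have := congrArg (fun l : List (Fin 2 → Option α) => l[k]?) h
      simp only [List.getElem?_map, List.getElem?_range hk, hlen ▸ hk,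
        List.getElem?_range (hlen ▸ hk)] at this
      have h2 : (![x[k]?, v[k]?] : Fin 2 → Option α) = ![x'[k]?, v'[k]?] := by
        simpa using this
      constructor
      · have := congrFun h2 0; simpa using this
      · have := congrFun h2 1; simpa using this
    · push_neg at hk
      have hk' := hlen ▸ hk
      constructor
      · rw [List.getElem?_eq_none (le_trans (le_max_left _ _) hk),
          List.getElem?_eq_none (le_trans (le_max_left _ _) hk')]
      · rw [List.getElem?_eq_none (le_trans (le_max_right _ _) hk),
          List.getElem?_eq_none (le_trans (le_max_right _ _) hk')]
  exact ⟨List.ext_getElem? fun k => (key k).1, List.ext_getElem? fun k => (key k).2⟩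

lemma conv_split_s13 {α : Type*} (x v : List α) (i : ℕ) (hx : x.length ≤ i) (hi : i ≤ v.length) :
    conv ![x, v] = (List.range i).map (fun k => ![x[k]?, v[k]?])
      ++ (v.drop i).map (fun c => ![none, some c]) := by
  rw [conv_pair]
  have hm : max x.length v.length = i + (v.length - i) := by omega
  rw [hm, List.range_add, List.map_append, List.map_map]
  congr 1
  apply List.ext_getElem?
  intro k
  by_cases hk : k < v.length - i
  · rw [List.getElem?_map, List.getElem?_map, List.getElem?_range hk,
      List.getElem?_drop]
    have h1 : x[i + k]? = none := List.getElem?_eq_none (by omega)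
    have h2 : v[i + k]? = some v[i + k] := List.getElem?_eq_getElem (by omega)
    have h3 : (List.drop i v)[k]? = some ((List.drop i v)[k]'(by simp; omega)) :=
      List.getElem?_eq_getElem (by simp; omega)
    rw [List.getElem?_drop] at h3
    simp only [Option.map_some, Function.comp_apply, h3, h1]
  · push_neg at hk
    rw [List.getElem?_eq_none, List.getElem?_eq_none] <;> simp <;> omega

lemma accepts_split {α σ : Type*} (M : DFA (Fin 2 → Option α) σ) (x v : List α) (i : ℕ)
    (hx : x.length ≤ i) (hi : i ≤ v.length) :
    conv ![x, v] ∈ M.accepts ↔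
      M.evalFrom (M.eval ((List.range i).map (fun k => ![x[k]?, v[k]?])))
        ((v.drop i).map (fun c => ![none, some c])) ∈ M.accept := by
  rw [DFA.mem_accepts, conv_split_s13 x v i hx hi, DFA.eval, DFA.evalFrom_of_append]

lemma compress {Γ σA σE : Type} [Fintype σA] [Fintype σE]
    (MA : DFA Γ σA) (ME : DFA (Fin 2 → Option Γ) σE) (n : ℕ) :
    ∀ v : List Γ, v ∈ MA.accepts →
    ∃ v' : List Γ, v' ∈ MA.accepts ∧
      v'.length ≤ n + Fintype.card σA * 2 ^ Fintype.card σE ∧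
      ∀ x : List Γ, x.length ≤ n →
        (conv ![x, v] ∈ ME.accepts ↔ conv ![x, v'] ∈ ME.accepts) := by
  classical
  set K := Fintype.card σA * 2 ^ Fintype.card σE with hK
  suffices H : ∀ m : ℕ, ∀ v : List Γ, v.length ≤ m → v ∈ MA.accepts →
      ∃ v' : List Γ, v' ∈ MA.accepts ∧ v'.length ≤ n + K ∧
      ∀ x : List Γ, x.length ≤ n →
        (conv ![x, v] ∈ ME.accepts ↔ conv ![x, v'] ∈ ME.accepts) by
    exact fun v hv => H v.length v le_rfl hv
  intro m
  induction m with
  | zero =>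
    intro v hv hvA
    exact ⟨v, hvA, by omega, fun x _ => Iff.rfl⟩
  | succ m ih =>
    intro v hlen hvA
    by_cases hshort : v.length ≤ n + K
    · exact ⟨v, hvA, hshort, fun x _ => Iff.rfl⟩
    push_neg at hshort
    letI : DecidableEq σE := Classical.decEq _
    set φ : ℕ → σA × (σE → Bool) := fun t =>
      (MA.evalFrom MA.start (v.take (n + t)),
       fun q => decide (ME.evalFrom q ((v.drop (n + t)).map (fun c => ![none, some c]))
          ∈ ME.accept)) with hφ
    have hcard : (Finset.univ : Finset (σA × (σE → Bool))).card < (Finset.range (K + 1)).card := by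
      rw [Finset.card_univ, Finset.card_range, Fintype.card_prod, Fintype.card_fun]
      simp [hK]
    obtain ⟨t₁, ht₁, t₂, ht₂, hne, heq⟩ :=
      Finset.exists_ne_map_eq_of_card_lt_of_maps_to hcard
        (f := φ) (fun a _ => Finset.mem_univ _)
    -- WLOG t₁ < t₂
    have main : ∀ t₁ t₂ : ℕ, t₁ < t₂ → t₂ ≤ K → φ t₁ = φ t₂ →
        ∃ v' : List Γ, v' ∈ MA.accepts ∧ v'.length ≤ n + K ∧
        ∀ x : List Γ, x.length ≤ n →
          (conv ![x, v] ∈ ME.accepts ↔ conv ![x, v'] ∈ ME.accepts) := by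
      intro t₁ t₂ hlt ht₂K heq
      set i := n + t₁ with hi
      set j := n + t₂ with hj
      have hij : i < j := by omega
      have hjv : j ≤ v.length := by omega
      set v' := v.take i ++ v.drop j with hv'
      have hlenv' : v'.length = i + (v.length - j) := by
        simp [hv', List.length_take, List.length_drop]
        omega
      have htakelen : (v.take i).length = i := by
        simp [List.length_take]
        omega
      have hv'A : v' ∈ MA.accepts := by
        have e1 : MA.evalFrom MA.start (v.take i) = MA.evalFrom MA.start (v.take j) :=
          congrArg Prod.fst heq
        have e2 : MA.eval v' = MA.eval v := by
          show MA.evalFrom MA.start v' = MA.evalFrom MA.start v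
          conv_rhs => rw [← List.take_append_drop j v]
          rw [DFA.evalFrom_of_append, DFA.evalFrom_of_append, e1]
        rw [DFA.mem_accepts, e2]
        exact hvA
      have hpat : ∀ x : List Γ, x.length ≤ n →
          (conv ![x, v] ∈ ME.accepts ↔ conv ![x, v'] ∈ ME.accepts) := by
        intro x hx
        have hxi : x.length ≤ i := by omega
        rw [accepts_split ME x v i hxi (by omega),
          accepts_split ME x v' i hxi (by omega)]
        have hpre : (List.range i).map (fun k => ![x[k]?, v'[k]?]) =
            (List.range i).map (fun k => ![x[k]?, v[k]?]) := by
          apply List.map_congr_left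
          intro k hk
          rw [List.mem_range] at hk
          have : v'[k]? = v[k]? := by
            rw [hv', List.getElem?_append_left (by rw [htakelen]; omega),
              List.getElem?_take]
            simp [hk]
          rw [this]
        have hdrop : v'.drop i = v.drop j := by
          rw [hv']
          exact List.drop_left' htakelen
        rw [hpre, hdrop]
        have e3 := congrFun (congrArg Prod.snd heq)
          (ME.eval ((List.range i).map (fun k => ![x[k]?, v[k]?])))
        rw [hi, hj]
        exact decide_eq_decide.mp e3
      obtain ⟨v'', hA'', hlen'', hpat''⟩ := ih v' (by omega) hv'A
      exact ⟨v'', hA'', hlen'', fun x hx => (hpat x hx).trans (hpat'' x hx)⟩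
    have hr₁ := Finset.mem_range.mp ht₁
    have hr₂ := Finset.mem_range.mp ht₂
    rcases Ne.lt_or_gt hne with h | h
    · exact main t₁ t₂ h (by omega) heq
    · exact main t₂ t₁ h (by omega) heq.symm

lemma exists_two_pow_big (a b : ℕ) : ∃ k : ℕ, a + b * k < 2 ^ k := by
  refine ⟨2 * (a + 2 * b + 1), ?_⟩
  set m := a + 2 * b + 1 with hm
  have h1 : m + 1 ≤ 2 ^ m := Nat.lt_two_pow_self (n := m)
  have h2 : 2 ^ (2 * m) = 2 ^ m * 2 ^ m := by rw [two_mul, pow_add]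
  rw [h2]
  have h3 : a + b * (2 * m) < (m + 1) * (m + 1) := by nlinarith
  exact lt_of_lt_of_le h3 (Nat.mul_le_mul h1 h1)

/-- The random graph has no automatic presentation: there is no graph on a regular
set of words, with regular (convoluted) edge relation, satisfying the random-graph
extension property. -/
theorem random_graph_not_automatic :
    ¬ ∃ (Γ : Type) (_ : Fintype Γ) (A : Set (List Γ)) (E : List Γ → List Γ → Prop),
        Language.IsRegular (A : Language Γ) ∧
        (∀ x ∈ A, ¬ E x x) ∧
        (∀ x ∈ A, ∀ y ∈ A, E x y → E y x) ∧
        Language.IsRegular {w | ∃ x ∈ A, ∃ y ∈ A, E x y ∧ w = conv ![x, y]} ∧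
        (∀ Y : Finset (List Γ), ↑Y ⊆ A →
          ∀ X₁ X₂ : Finset (List Γ), Disjoint X₁ X₂ →
            (∀ x, x ∈ Y ↔ x ∈ X₁ ∨ x ∈ X₂) →
            ∃ y ∈ A, (∀ x ∈ X₁, E y x) ∧ (∀ x ∈ X₂, ¬ E y x)) := by
  rintro ⟨Γ, instΓ, A, E, hAreg, -, hsym, hEreg, hext⟩
  classical
  obtain ⟨σA, instA, MA, hMA⟩ := hAreg
  obtain ⟨σE, instE, ME, hME⟩ := hEreg
  have hAmem : ∀ w : List Γ, w ∈ MA.accepts ↔ w ∈ A := by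
    intro w; rw [hMA]; exact Iff.rfl
  have hEiff : ∀ x y : List Γ, x ∈ A → y ∈ A → (E x y ↔ conv ![x, y] ∈ ME.accepts) := by
    intro x y hx hy
    rw [hME]
    constructor
    · intro h; exact ⟨x, hx, y, hy, h, rfl⟩
    · rintro ⟨a, ha, b, hb, hab, hconv⟩
      obtain ⟨h1, h2⟩ := conv_pair_inj hconv
      subst h1; subst h2
      exact hab
  have hEyx : ∀ y x : List Γ, y ∈ A → x ∈ A → (E y x ↔ conv ![x, y] ∈ ME.accepts) := by
    intro y x hy hx
    constructor
    · intro h; exact (hEiff x y hx hy).mp (hsym y hy x hx h)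
    · intro h; exact hsym x hx y hy ((hEiff x y hx hy).mpr h)
  have hfin : ∀ m : ℕ, (A ∩ {w : List Γ | w.length ≤ m}).Finite :=
    fun m => (List.finite_length_le Γ m).subset Set.inter_subset_right
  set Xf : ℕ → Finset (List Γ) := fun m => (hfin m).toFinset with hXf
  have hXmem : ∀ m w, w ∈ Xf m ↔ w ∈ A ∧ w.length ≤ m := by
    intro m w
    simp [hXf, Set.Finite.mem_toFinset]
  set cnt : ℕ → ℕ := fun m => (Xf m).card with hcnt
  -- upper bound
  have hup : ∀ m, cnt m ≤ (Fintype.card Γ + 2) ^ m := by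
    intro m
    have hle : (Xf m).card ≤ (Finset.univ : Finset (Fin m → Option Γ)).card := by
      apply Finset.card_le_card_of_injOn (fun w => fun i : Fin m => w[i.1]?)
      · intro a _; exact Finset.mem_univ _
      · intro w₁ h₁ w₂ h₂ hfe
        rw [Finset.mem_coe, hXmem] at h₁ h₂
        apply List.ext_getElem?
        intro k
        by_cases hk : k < m
        · exact congrFun hfe ⟨k, hk⟩
        · rw [List.getElem?_eq_none (by omega), List.getElem?_eq_none (by omega)]
    rw [Finset.card_univ, Fintype.card_fun, Fintype.card_option, Fintype.card_fin] at hle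
    calc cnt m ≤ (Fintype.card Γ + 1) ^ m := hle
      _ ≤ (Fintype.card Γ + 2) ^ m := Nat.pow_le_pow_left (by omega) m
  set K := Fintype.card σA * 2 ^ Fintype.card σE with hK
  -- step
  have hstep : ∀ n : ℕ, 2 ^ cnt n ≤ cnt (n + K) := by
    intro n
    have key : ∀ S : Finset (List Γ), S ⊆ Xf n →
        ∃ y' : List Γ, y' ∈ A ∧ y'.length ≤ n + K ∧ ∀ x ∈ Xf n, (E y' x ↔ x ∈ S) := by
      intro S hS
      obtain ⟨y, hyA, hadj, hnadj⟩ := hext (Xf n)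
        (by intro w hw; rw [Finset.mem_coe] at hw; exact ((hXmem n w).mp hw).1)
        S (Xf n \ S) Finset.disjoint_sdiff
        (by
          intro x
          have hSx : x ∈ S → x ∈ Xf n := fun h => hS h
          simp only [Finset.mem_sdiff]
          tauto)
      have hyacc : y ∈ MA.accepts := (hAmem y).mpr hyA
      obtain ⟨y', hy'acc, hy'len, hy'pat⟩ := compress MA ME n y hyacc
      have hy'A : y' ∈ A := (hAmem y').mp hy'acc
      refine ⟨y', hy'A, hy'len, ?_⟩
      intro x hx
      have hxA : x ∈ A := ((hXmem n x).mp hx).1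
      have hxlen : x.length ≤ n := ((hXmem n x).mp hx).2
      have h1 : E y' x ↔ E y x := by
        rw [hEyx y' x hy'A hxA, hEyx y x hyA hxA]
        exact (hy'pat x hxlen).symm
      rw [h1]
      constructor
      · intro h
        by_contra hxS
        exact hnadj x (Finset.mem_sdiff.mpr ⟨hx, hxS⟩) h
      · exact fun h => hadj x h
    choose f hf1 hf2 hf3 using key
    have hcardle : (Xf n).powerset.card ≤ (Xf (n + K)).card := by
      apply Finset.card_le_card_of_injOn (fun S => if h : S ⊆ Xf n then f S h else [])
      · intro S hS
        rw [Finset.mem_coe, Finset.mem_powerset] at hS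
        simp only [dif_pos hS]
        rw [Finset.mem_coe, hXmem]
        exact ⟨hf1 S hS, hf2 S hS⟩
      · intro S hS T hT hFeq
        rw [Finset.mem_coe, Finset.mem_powerset] at hS hT
        simp only [dif_pos hS, dif_pos hT] at hFeq
        ext x
        constructor
        · intro hxS
          have hxX := hS hxS
          have h := (hf3 S hS x hxX).mpr hxS
          rw [hFeq] at h
          exact (hf3 T hT x hxX).mp h
        · intro hxT
          have hxX := hT hxT
          have h := (hf3 T hT x hxX).mpr hxT
          rw [← hFeq] at h
          exact (hf3 S hS x hxX).mp h
    rw [Finset.card_powerset] at hcardle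
    exact hcardle
  -- base
  obtain ⟨y₀, hy₀A, -, -⟩ := hext ∅ (by simp) ∅ ∅ (by simp) (by simp)
  set n₀ := y₀.length with hn₀
  have hbase : 1 ≤ cnt n₀ :=
    Finset.card_pos.mpr ⟨y₀, (hXmem n₀ y₀).mpr ⟨hy₀A, le_rfl⟩⟩
  -- tower
  have htow : ∀ k : ℕ, 2 ^ 2 ^ k ≤ cnt (n₀ + (k + 1) * K) := by
    intro k
    induction k with
    | zero =>
      have h2 : (2:ℕ) ^ 1 ≤ 2 ^ cnt n₀ := Nat.pow_le_pow_right (by norm_num) hbase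
      have h3 := le_trans h2 (hstep n₀)
      simpa using h3
    | succ k ihk =>
      have h1 : 2 ^ cnt (n₀ + (k + 1) * K) ≤ cnt (n₀ + (k + 1) * K + K) := hstep _
      have h2 : 2 ^ 2 ^ (k + 1) ≤ 2 ^ cnt (n₀ + (k + 1) * K) := by
        apply Nat.pow_le_pow_right (by norm_num)
        calc 2 ^ (k + 1) ≤ 2 ^ 2 ^ k := Nat.pow_le_pow_right (by norm_num) (Nat.lt_two_pow_self (n := k))
          _ ≤ cnt (n₀ + (k + 1) * K) := ihk
      have heqn : n₀ + (k + 1 + 1) * K = n₀ + (k + 1) * K + K := by ring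
      rw [heqn]
      exact le_trans h2 h1
  -- contradiction
  set C := Fintype.card Γ + 2 with hC
  obtain ⟨k, hk⟩ := exists_two_pow_big (C * (n₀ + K)) (C * K)
  have h1 : 2 ^ 2 ^ k ≤ C ^ (n₀ + (k + 1) * K) := le_trans (htow k) (hup _)
  have h2 : C ^ (n₀ + (k + 1) * K) ≤ 2 ^ (C * (n₀ + (k + 1) * K)) := by
    calc C ^ (n₀ + (k + 1) * K) ≤ (2 ^ C) ^ (n₀ + (k + 1) * K) :=
          Nat.pow_le_pow_left (le_of_lt (Nat.lt_two_pow_self (n := C))) _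
      _ = 2 ^ (C * (n₀ + (k + 1) * K)) := by rw [← pow_mul]
  have h3 : 2 ^ 2 ^ k ≤ 2 ^ (C * (n₀ + K) + C * K * k) := by
    refine le_trans h1 (le_trans h2 ?_)
    exact le_of_eq (by ring_nf)
  have h4 : 2 ^ k ≤ C * (n₀ + K) + C * K * k :=
    (Nat.pow_le_pow_iff_right (by norm_num : 1 < 2)).mp h3
  omega
end
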